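/- Positivity preservation of the first-order conservative multidimensional scheme under the discrete divergence-free condition (Corollary 4.2, one cell, one step): Let d = 2, N ≥ 1, |K| > 0, edge lengths ℓ₁,…,ℓ_N > 0 and unit outward normals ξ⁽¹⁾,…,ξ⁽ᴺ⁾ ∈ ℝ² with Σⱼ ℓⱼ ξ⁽ʲ⁾ = 0. Let Ū_K ∈ 𝒢 with magnetic field B̄_K, and Ūⱼ ∈ 𝒢 with magnetic fields B̄ⱼ (j = 1,…,N). For each j let wave speeds satisfy σⱼʳ ≥ α_r(Ūⱼ, Ū_K; ξ⁽ʲ⁾) and σⱼˡ ≤ α_l(Ū_K, Ūⱼ; ξ⁽ʲ⁾), with σⱼ⁺ = max{σⱼʳ, 0}, σⱼ⁻ = min{σⱼˡ, 0}. Assume the discrete divergence-free condition |K|⁻¹ Σⱼ ℓⱼ ⟨ξ⁽ʲ⁾, (σⱼ⁺ B̄_K − σⱼ⁻ B̄ⱼ)/(σⱼ⁺ − σⱼ⁻)⟩ = 0 and the CFL condition (Δt/|K|) Σⱼ ℓⱼ(−σⱼ⁻) < 1 with Δt > 0. Then the conservative update Ū' = Ū_K − (Δt/|K|) Σⱼ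 ℓⱼ F̂(Ū_K, Ūⱼ; ξ⁽ʲ⁾) belongs to 𝒢. -/

import Mathlib

noncomputable section

open Finset

/-- An MHD state `U = (ρ, m, B, E)` viewed as a vector in `ℝ⁸`. -/
abbrev MHDState := Fin 8 → ℝ

namespace MHD

/-- Build a state from density, momentum, magnetic field, total energy. -/
def mk (ρ : ℝ) (m B : Fin 3 → ℝ) (E : ℝ) : MHDState :=
  ![ρ, m 0, m 1, m 2, B 0, B 1, B 2, E]

/-- Density component. -/
def dens (U : MHDState) : ℝ := U 0

/-- Momentum components. -/
def mom (U : MHDState) : Fin 3 → ℝ := ![U 1, U 2, U 3]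

/-- Magnetic field components. -/
def magB (U : MHDState) : Fin 3 → ℝ := ![U 4, U 5, U 6]

/-- Total energy component. -/
def toten (U : MHDState) : ℝ := U 7

/-- Euclidean dot product on `ℝ³`. -/
def dot3 (a b : Fin 3 → ℝ) : ℝ := ∑ k, a k * b k

/-- Squared Euclidean norm on `ℝ³`. -/
def sq3 (a : Fin 3 → ℝ) : ℝ := dot3 a a

/-- Euclidean norm on `ℝ³`. -/
def norm3 (a : Fin 3 → ℝ) : ℝ := Real.sqrt (sq3 a)

/-- Velocity `v = m / ρ`. -/
def vel (U : MHDState) : Fin 3 → ℝ := fun k => mom U k / dens U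

/-- Internal energy `𝓔(U) = E − (|m|²/ρ + |B|²)/2`. -/
def intE (U : MHDState) : ℝ := toten U - (sq3 (mom U) / dens U + sq3 (magB U)) / 2

/-- Specific internal energy `e = 𝓔(U)/ρ`. -/
def specE (U : MHDState) : ℝ := intE U / dens U

/-- The admissible state set `𝒢`. -/
def Gset : Set MHDState := {U | 0 < dens U ∧ 0 < intE U}

/-- The set `𝒢_ρ` of states with positive density. -/
def Grho : Set MHDState := {U | 0 < dens U}

/-- Euclidean dot product on `ℝ⁸`. -/
def dot8 (U V : MHDState) : ℝ := ∑ i, U i * V i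

/-- The vector `n* = (|v*|²/2, −v*, −B*, 1)`. -/
def nstar (vs Bs : Fin 3 → ℝ) : MHDState :=
  mk (sq3 vs / 2) (fun k => -vs k) (fun k => -Bs k) 1

/-- The set `𝒢*`. -/
def GstarSet : Set MHDState :=
  {U | 0 < dens U ∧ ∀ vs Bs : Fin 3 → ℝ, 0 < dot8 U (nstar vs Bs) + sq3 Bs / 2}

/-- Equation of state assumption: for `ρ > 0`, `e > 0 ↔ p(ρ,e) > 0`. -/
def IsEOS (pfun : ℝ → ℝ → ℝ) : Prop :=
  ∀ ρ e : ℝ, 0 < ρ → (0 < e ↔ 0 < pfun ρ e)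

/-- Pressure of a state, via the equation of state. -/
def pres (pfun : ℝ → ℝ → ℝ) (U : MHDState) : ℝ := pfun (dens U) (specE U)

/-- Total pressure `p + |B|²/2`. -/
def ptot (pfun : ℝ → ℝ → ℝ) (U : MHDState) : ℝ := pres pfun U + sq3 (magB U) / 2

/-- The `i`-th flux `F_i(U)`. -/
def flux (pfun : ℝ → ℝ → ℝ) (i : Fin 3) (U : MHDState) : MHDState :=
  mk (dens U * vel U i)
    (fun k => dens U * vel U i * vel U k - magB U i * magB U k
      + ptot pfun U * (if k = i then 1 else 0))
    (fun k => vel U i * magB U k - magB U i * vel U k)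
    (vel U i * (toten U + ptot pfun U) - magB U i * dot3 (vel U) (magB U))

/-- Directional inner product `⟨ξ, w⟩ = Σ_{k<d} ξ_k w_k` for `ξ ∈ ℝ^d`, `w ∈ ℝ³`, `d ≤ 3`. -/
def dirDot {d : ℕ} (hd : d ≤ 3) (ξ : Fin d → ℝ) (w : Fin 3 → ℝ) : ℝ :=
  ∑ k, ξ k * w (Fin.castLE hd k)

/-- Directional flux `⟨ξ, F(U)⟩ = Σ_{i<d} ξ_i F_i(U)`. -/
def dirFlux (pfun : ℝ → ℝ → ℝ) {d : ℕ} (hd : d ≤ 3) (ξ : Fin d → ℝ) (U : MHDState) :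
    MHDState :=
  ∑ i, ξ i • flux pfun (Fin.castLE hd i) U

/-- `ξ` is a unit vector. -/
def unitVec {d : ℕ} (ξ : Fin d → ℝ) : Prop := (∑ k, (ξ k) ^ 2) = 1

/-- `𝒞_s(U) = p / (ρ √(2e))`. -/
def soundC (pfun : ℝ → ℝ → ℝ) (U : MHDState) : ℝ :=
  pres pfun U / (dens U * Real.sqrt (2 * specE U))

/-- `𝒞(U; ξ)`. -/
def waveC (pfun : ℝ → ℝ → ℝ) {d : ℕ} (hd : d ≤ 3) (ξ : Fin d → ℝ) (U : MHDState) : ℝ :=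
  Real.sqrt ((soundC pfun U ^ 2 + sq3 (magB U) / dens U
    + Real.sqrt ((soundC pfun U ^ 2 + sq3 (magB U) / dens U) ^ 2
      - 4 * soundC pfun U ^ 2 * dirDot hd ξ (magB U) ^ 2 / dens U)) / 2)

/-- Roe-type averaged velocity `v̄ = (√ρ v + √ρ̃ ṽ)/(√ρ + √ρ̃)`. -/
def roeV (U Ut : MHDState) : Fin 3 → ℝ := fun k =>
  (Real.sqrt (dens U) * vel U k + Real.sqrt (dens Ut) * vel Ut k)
    / (Real.sqrt (dens U) + Real.sqrt (dens Ut))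

/-- `α_r(U, Ũ; ξ)`. -/
def alphaR (pfun : ℝ → ℝ → ℝ) {d : ℕ} (hd : d ≤ 3) (ξ : Fin d → ℝ) (U Ut : MHDState) : ℝ :=
  max (dirDot hd ξ (vel U)) (dirDot hd ξ (roeV U Ut)) + waveC pfun hd ξ U
    + norm3 (magB U - magB Ut) / (Real.sqrt (dens U) + Real.sqrt (dens Ut))

/-- `α_l(U, Ũ; ξ)`. -/
def alphaL (pfun : ℝ → ℝ → ℝ) {d : ℕ} (hd : d ≤ 3) (ξ : Fin d → ℝ) (U Ut : MHDState) : ℝ :=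
  min (dirDot hd ξ (vel U)) (dirDot hd ξ (roeV U Ut)) - waveC pfun hd ξ U
    - norm3 (magB U - magB Ut) / (Real.sqrt (dens U) + Real.sqrt (dens Ut))

/-- `α_⋆(U, Ũ; ξ)`. -/
def alphaS (pfun : ℝ → ℝ → ℝ) {d : ℕ} (hd : d ≤ 3) (ξ : Fin d → ℝ) (U Ut : MHDState) : ℝ :=
  max (|dirDot hd ξ (vel U)|) (|dirDot hd ξ (roeV U Ut)|) + waveC pfun hd ξ U
    + norm3 (magB U - magB Ut) / (Real.sqrt (dens U) + Real.sqrt (dens Ut))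

/-- The vector `θ(U, v*, B*) = 2^{−1/2}(B − B*, √ρ(v − v*), √(2ρe)) ∈ ℝ⁷`. -/
def theta (U : MHDState) (vs Bs : Fin 3 → ℝ) : Fin 7 → ℝ :=
  ![(magB U 0 - Bs 0) / Real.sqrt 2,
    (magB U 1 - Bs 1) / Real.sqrt 2,
    (magB U 2 - Bs 2) / Real.sqrt 2,
    Real.sqrt (dens U) * (vel U 0 - vs 0) / Real.sqrt 2,
    Real.sqrt (dens U) * (vel U 1 - vs 1) / Real.sqrt 2,
    Real.sqrt (dens U) * (vel U 2 - vs 2) / Real.sqrt 2,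
    Real.sqrt (2 * intE U) / Real.sqrt 2]

/-- `|θ|²`. -/
def thetaSq (U : MHDState) (vs Bs : Fin 3 → ℝ) : ℝ := ∑ k, theta U vs Bs k ^ 2

/-- Godunov–Powell source vector `S(U) = (0, B, v, v·B)`. -/
def source (U : MHDState) : MHDState := mk 0 (magB U) (vel U) (dot3 (vel U) (magB U))

/-- HLL numerical flux with clamped wave speeds `σm ≤ 0 ≤ σp`. -/
def hllFlux (pfun : ℝ → ℝ → ℝ) {d : ℕ} (hd : d ≤ 3) (ξ : Fin d → ℝ)
    (Um Up : MHDState) (σm σp : ℝ) : MHDState :=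
  (σp - σm)⁻¹ • (σp • dirFlux pfun hd ξ Um - σm • dirFlux pfun hd ξ Up
    + (σm * σp) • (Up - Um))

/-- HLL intermediate state `H(U⁻, U⁺; ξ)`. -/
def hllMid (pfun : ℝ → ℝ → ℝ) {d : ℕ} (hd : d ≤ 3) (ξ : Fin d → ℝ)
    (Um Up : MHDState) (σm σp : ℝ) : MHDState :=
  (σp - σm)⁻¹ • (σp • Up - dirFlux pfun hd ξ Up - σm • Um + dirFlux pfun hd ξ Um)

/-- The quantity `α̂_j` of Theorem 2.3. -/
def alphaHat (pfun : ℝ → ℝ → ℝ) {d : ℕ} (hd : d ≤ 3) {N : ℕ}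
    (s : Fin N → ℝ) (ξ : Fin N → Fin d → ℝ) (U : Fin N → MHDState) (j : Fin N) : ℝ :=
  max (dirDot hd (ξ j) (vel (U j)))
      ((∑ i, s i)⁻¹ * ∑ i, s i * dirDot hd (fun k => ξ j k - ξ i k) (roeV (U j) (U i)))
  + waveC pfun hd (ξ j) (U j)
  + 2 * (∑ i, s i)⁻¹ * ∑ i, s i *
      (norm3 (magB (U j) - magB (U i)) / (Real.sqrt (dens (U j)) + Real.sqrt (dens (U i))))

def d1le3 : (1 : ℕ) ≤ 3 := by omega
def d2le3 : (2 : ℕ) ≤ 3 := by omega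

/-- In one dimension the direction `ξ = 1`. -/
def xi1 : Fin 1 → ℝ := fun _ => 1

section Helpers

lemma castLE20 : Fin.castLE d2le3 (0 : Fin 2) = 0 := rfl
lemma castLE21 : Fin.castLE d2le3 (1 : Fin 2) = 1 := rfl

lemma mkv0 (ρ : ℝ) (m B : Fin 3 → ℝ) (E : ℝ) : mk ρ m B E 0 = ρ := rfl
lemma mkv1 (ρ : ℝ) (m B : Fin 3 → ℝ) (E : ℝ) : mk ρ m B E 1 = m 0 := rfl
lemma mkv2 (ρ : ℝ) (m B : Fin 3 → ℝ) (E : ℝ) : mk ρ m B E 2 = m 1 := rfl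
lemma mkv3 (ρ : ℝ) (m B : Fin 3 → ℝ) (E : ℝ) : mk ρ m B E 3 = m 2 := rfl
lemma mkv4 (ρ : ℝ) (m B : Fin 3 → ℝ) (E : ℝ) : mk ρ m B E 4 = B 0 := rfl
lemma mkv5 (ρ : ℝ) (m B : Fin 3 → ℝ) (E : ℝ) : mk ρ m B E 5 = B 1 := rfl
lemma mkv6 (ρ : ℝ) (m B : Fin 3 → ℝ) (E : ℝ) : mk ρ m B E 6 = B 2 := rfl
lemma mkv7 (ρ : ℝ) (m B : Fin 3 → ℝ) (E : ℝ) : mk ρ m B E 7 = E := rfl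

lemma momv0 (U : MHDState) : mom U 0 = U 1 := rfl
lemma momv1 (U : MHDState) : mom U 1 = U 2 := rfl
lemma momv2 (U : MHDState) : mom U 2 = U 3 := rfl
lemma magBv0 (U : MHDState) : magB U 0 = U 4 := rfl
lemma magBv1 (U : MHDState) : magB U 1 = U 5 := rfl
lemma magBv2 (U : MHDState) : magB U 2 = U 6 := rfl

lemma dot3_expand (a b : Fin 3 → ℝ) : dot3 a b = a 0 * b 0 + a 1 * b 1 + a 2 * b 2 := by
  simp [dot3, Fin.sum_univ_three]

lemma dot8_expand (U V : MHDState) : dot8 U V = U 0 * V 0 + U 1 * V 1 + U 2 * V 2 + U 3 * V 3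
    + U 4 * V 4 + U 5 * V 5 + U 6 * V 6 + U 7 * V 7 := by
  simp [dot8, Fin.sum_univ_eight]

lemma dirDot_expand (ξ : Fin 2 → ℝ) (w : Fin 3 → ℝ) :
    dirDot d2le3 ξ w = ξ 0 * w 0 + ξ 1 * w 1 := by
  simp [dirDot, Fin.sum_univ_two, castLE20, castLE21]

-- E1
lemma E1 (U : MHDState) (hρ : dens U ≠ 0) (vs Bs : Fin 3 → ℝ) :
    dot8 U (nstar vs Bs) + sq3 Bs / 2
      = dens U * sq3 (fun k => vel U k - vs k) / 2 + sq3 (fun k => magB U k - Bs k) / 2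
        + intE U := by
  simp only [dot8_expand, sq3, dot3_expand, nstar, intE, vel, mom, magB, dens, toten,
    mkv0, mkv1, mkv2, mkv3, mkv4, mkv5, mkv6, mkv7, momv0, momv1, momv2,
    magBv0, magBv1, magBv2]
  have h : U 0 ≠ 0 := hρ
  field_simp
  simp only [show (![U 1, U 2, U 3] : Fin 3 → ℝ) 0 = U 1 from rfl, show (![U 1, U 2, U 3] : Fin 3 → ℝ) 1 = U 2 from rfl,
    show (![U 1, U 2, U 3] : Fin 3 → ℝ) 2 = U 3 from rfl, show (![U 4, U 5, U 6] : Fin 3 → ℝ) 0 = U 4 from rfl,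
    show (![U 4, U 5, U 6] : Fin 3 → ℝ) 1 = U 5 from rfl, show (![U 4, U 5, U 6] : Fin 3 → ℝ) 2 = U 6 from rfl]
  ring
end Helpers
section E2sec
variable {pfun : ℝ → ℝ → ℝ}

lemma dirFlux_apply (ξ : Fin 2 → ℝ) (U : MHDState) (i : Fin 8) :
    dirFlux pfun d2le3 ξ U i = ξ 0 * flux pfun 0 U i + ξ 1 * flux pfun 1 U i := by
  simp [dirFlux, Fin.sum_univ_two, castLE20, castLE21]

lemma dirFlux_dens (ξ : Fin 2 → ℝ) (U : MHDState) :
    dirFlux pfun d2le3 ξ U 0 = dens U * dirDot d2le3 ξ (vel U) := by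
  simp only [dirFlux_apply, flux, mkv0, dirDot_expand]; ring

set_option maxHeartbeats 3200000 in
lemma E2 (ξ : Fin 2 → ℝ) (U : MHDState) (hρ : dens U ≠ 0) (vs Bs : Fin 3 → ℝ) :
    dot8 (dirFlux pfun d2le3 ξ U) (nstar vs Bs) =
      dirDot d2le3 ξ (vel U) * dot8 U (nstar vs Bs)
      + dirDot d2le3 ξ (magB U) * dot3 vs Bs
      - dirDot d2le3 ξ (magB U) * dot3 (fun k => vel U k - vs k) (fun k => magB U k - Bs k)
      + (pres pfun U + sq3 (magB U) / 2) * dirDot d2le3 ξ (fun k => vel U k - vs k) := by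
  have h : U 0 ≠ 0 := hρ
  simp only [dot8_expand, dirFlux_apply, flux, ptot, sq3, dot3_expand, dirDot_expand, nstar,
    intE, vel, mom, magB, dens, toten,
    mkv0, mkv1, mkv2, mkv3, mkv4, mkv5, mkv6, mkv7, momv0, momv1, momv2, magBv0, magBv1, magBv2]
  norm_num [Fin.ext_iff]
  field_simp
  simp only [show (![U 1, U 2, U 3] : Fin 3 → ℝ) 0 = U 1 from rfl, show (![U 1, U 2, U 3] : Fin 3 → ℝ) 1 = U 2 from rfl,
    show (![U 1, U 2, U 3] : Fin 3 → ℝ) 2 = U 3 from rfl, show (![U 4, U 5, U 6] : Fin 3 → ℝ) 0 = U 4 from rfl,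
    show (![U 4, U 5, U 6] : Fin 3 → ℝ) 1 = U 5 from rfl, show (![U 4, U 5, U 6] : Fin 3 → ℝ) 2 = U 6 from rfl]
  ring
end E2sec
section Basics
variable {pfun : ℝ → ℝ → ℝ}

lemma sq3_expand (a : Fin 3 → ℝ) : sq3 a = a 0 ^ 2 + a 1 ^ 2 + a 2 ^ 2 := by
  simp [sq3, dot3_expand]; ring

lemma sq3_nonneg (a : Fin 3 → ℝ) : 0 ≤ sq3 a := by
  rw [sq3_expand]; positivity

lemma norm3_nonneg (a : Fin 3 → ℝ) : 0 ≤ norm3 a := Real.sqrt_nonneg _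

lemma norm3_sq (a : Fin 3 → ℝ) : norm3 a ^ 2 = sq3 a := Real.sq_sqrt (sq3_nonneg a)

lemma abs_le_of_sq {x y : ℝ} (h : x ^ 2 ≤ y ^ 2) (hy : 0 ≤ y) : |x| ≤ y := by
  rcases abs_cases x with ⟨h1, _⟩ | ⟨h1, _⟩ <;> nlinarith [abs_nonneg x]

lemma dot3_sq_le (a b : Fin 3 → ℝ) : dot3 a b ^ 2 ≤ sq3 a * sq3 b := by
  simp only [dot3_expand, sq3_expand]
  nlinarith [sq_nonneg (a 0 * b 1 - a 1 * b 0), sq_nonneg (a 0 * b 2 - a 2 * b 0),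
    sq_nonneg (a 1 * b 2 - a 2 * b 1)]

lemma abs_dot3_le (a b : Fin 3 → ℝ) : |dot3 a b| ≤ norm3 a * norm3 b := by
  apply abs_le_of_sq _ (mul_nonneg (norm3_nonneg a) (norm3_nonneg b))
  rw [mul_pow, norm3_sq, norm3_sq]; exact dot3_sq_le a b

lemma abs_dirDot_le {ξ : Fin 2 → ℝ} (hξ : unitVec ξ) (w : Fin 3 → ℝ) :
    |dirDot d2le3 ξ w| ≤ norm3 w := by
  have h1 : ξ 0 ^ 2 + ξ 1 ^ 2 = 1 := by
    have := hξ; simpa [unitVec, Fin.sum_univ_two] using this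
  apply abs_le_of_sq _ (norm3_nonneg w)
  rw [norm3_sq, dirDot_expand, sq3_expand]
  nlinarith [sq_nonneg (ξ 0 * w 1 - ξ 1 * w 0), sq_nonneg (w 2), sq_nonneg (ξ 0 * w 0 + ξ 1 * w 1)]

lemma specE_pos {U : MHDState} (hU : U ∈ Gset) : 0 < specE U := div_pos hU.2 hU.1

lemma pres_pos (hEOS : IsEOS pfun) {U : MHDState} (hU : U ∈ Gset) : 0 < pres pfun U :=
  (hEOS _ _ hU.1).mp (specE_pos hU)

-- 2D Cauchy-Schwarz with sqrt
lemma cs2 (x y X Y : ℝ) : x * X + y * Y ≤ Real.sqrt (x ^ 2 + y ^ 2) * Real.sqrt (X ^ 2 + Y ^ 2) := by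
  have h1 : (0:ℝ) ≤ x ^ 2 + y ^ 2 := by positivity
  have h2 : (0:ℝ) ≤ X ^ 2 + Y ^ 2 := by positivity
  have e1 := Real.sq_sqrt h1
  have e2 := Real.sq_sqrt h2
  have s1 := Real.sqrt_nonneg (x ^ 2 + y ^ 2)
  have s2 := Real.sqrt_nonneg (X ^ 2 + Y ^ 2)
  nlinarith [sq_nonneg (x * Y - y * X), sq_nonneg (Real.sqrt (x ^ 2 + y ^ 2) * Real.sqrt (X ^ 2 + Y ^ 2) - (x * X + y * Y)), sq_nonneg (Real.sqrt (x ^ 2 + y ^ 2) * Real.sqrt (X ^ 2 + Y ^ 2) + (x * X + y * Y)), mul_nonneg s1 s2]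

lemma sqrt_amgm (A B : ℝ) (hA : 0 ≤ A) (hB : 0 ≤ B) : Real.sqrt A * Real.sqrt B ≤ (A + B) / 2 := by
  nlinarith [sq_nonneg (Real.sqrt A - Real.sqrt B), Real.sq_sqrt hA, Real.sq_sqrt hB]


-- core quadratic form lemma
lemma core_quad (a1 a2 a3 C t τ β η : ℝ) (ha1 : 0 ≤ a1) (ha2 : 0 ≤ a2) (ha3 : 0 ≤ a3)
    (hC : 0 ≤ C) (ht : 0 ≤ t) (hτ : 0 ≤ τ) (hβ : 0 ≤ β) (hη : 0 ≤ η)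
    (hdet : a1 ^ 2 * a3 ^ 2 ≤ (C ^ 2 - a1 ^ 2 - a2 ^ 2) * (C ^ 2 - a3 ^ 2))
    (htr : a1 ^ 2 + a2 ^ 2 + a3 ^ 2 ≤ 2 * C ^ 2) :
    a1 * t * β + a2 * t * η + a3 * τ * β ≤ C * (t ^ 2 + τ ^ 2 + β ^ 2 + η ^ 2) / 2 := by
  have claim1 : a3 ^ 2 ≤ C ^ 2 := by nlinarith [sq_nonneg (a1 * a3), sq_nonneg (a3 ^ 2 - C ^ 2)]
  have claim2 : a1 ^ 2 + a2 ^ 2 ≤ C ^ 2 := by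
    nlinarith [sq_nonneg (a1 * a3), sq_nonneg (C ^ 2 - a1 ^ 2 - a2 ^ 2)]
  have step1 : (a1 * t + a3 * τ) ^ 2 + (a2 * t) ^ 2 ≤ C ^ 2 * (t ^ 2 + τ ^ 2) := by
    set P1 := C ^ 2 - a3 ^ 2 with hP1
    set P2 := C ^ 2 - a1 ^ 2 - a2 ^ 2 with hP2
    have hP1n : 0 ≤ P1 := by simp [hP1]; linarith
    have hP2n : 0 ≤ P2 := by simp [hP2]; linarith
    set q1 := Real.sqrt P1 with hq1
    set q2 := Real.sqrt P2 with hq2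
    have e1 : q1 ^ 2 = P1 := Real.sq_sqrt hP1n
    have e2 : q2 ^ 2 = P2 := Real.sq_sqrt hP2n
    have hq1n : 0 ≤ q1 := Real.sqrt_nonneg _
    have hq2n : 0 ≤ q2 := Real.sqrt_nonneg _
    have hq : a1 * a3 ≤ q1 * q2 := by
      have h := abs_le_of_sq (x := a1 * a3) (y := q1 * q2) ?_ (mul_nonneg hq1n hq2n)
      · calc a1 * a3 ≤ |a1 * a3| := le_abs_self _
          _ ≤ q1 * q2 := h
      · rw [mul_pow, mul_pow, e1, e2]; nlinarith [hdet]
    nlinarith [sq_nonneg (q2 * t - q1 * τ), mul_nonneg ht hτ, e1, e2,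
      mul_le_mul_of_nonneg_right hq (mul_nonneg ht hτ)]
  have key : Real.sqrt (β ^ 2 + η ^ 2) * Real.sqrt (C ^ 2 * (t ^ 2 + τ ^ 2))
      = Real.sqrt (C * (β ^ 2 + η ^ 2)) * Real.sqrt (C * (t ^ 2 + τ ^ 2)) := by
    rw [← Real.sqrt_mul (by positivity), ← Real.sqrt_mul (by positivity)]
    congr 1; ring
  calc a1 * t * β + a2 * t * η + a3 * τ * β
      = β * (a1 * t + a3 * τ) + η * (a2 * t) := by ring
    _ ≤ Real.sqrt (β ^ 2 + η ^ 2) * Real.sqrt ((a1 * t + a3 * τ) ^ 2 + (a2 * t) ^ 2) := cs2 _ _ _ _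
    _ ≤ Real.sqrt (β ^ 2 + η ^ 2) * Real.sqrt (C ^ 2 * (t ^ 2 + τ ^ 2)) := by
        apply mul_le_mul_of_nonneg_left (Real.sqrt_le_sqrt step1) (Real.sqrt_nonneg _)
    _ = Real.sqrt (C * (β ^ 2 + η ^ 2)) * Real.sqrt (C * (t ^ 2 + τ ^ 2)) := key
    _ ≤ (C * (β ^ 2 + η ^ 2) + C * (t ^ 2 + τ ^ 2)) / 2 :=
        sqrt_amgm _ _ (by positivity) (by positivity)
    _ = C * (t ^ 2 + τ ^ 2 + β ^ 2 + η ^ 2) / 2 := by ring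
end Basics
section SideBound
set_option maxHeartbeats 1600000
variable {pfun : ℝ → ℝ → ℝ}

lemma soundC_pos (hEOS : IsEOS pfun) {U : MHDState} (hU : U ∈ Gset) : 0 < soundC pfun U := by
  have he := specE_pos hU
  have hp := pres_pos hEOS hU
  have : (0:ℝ) < Real.sqrt (2 * specE U) := Real.sqrt_pos.2 (by linarith)
  exact div_pos hp (mul_pos hU.1 this)

lemma Bxi_sq_le {ξ : Fin 2 → ℝ} (hξ : unitVec ξ) (B : Fin 3 → ℝ) :
    dirDot d2le3 ξ B ^ 2 ≤ sq3 B := by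
  have h := abs_dirDot_le hξ B
  have h2 : |dirDot d2le3 ξ B| ^ 2 ≤ norm3 B ^ 2 := by
    apply pow_le_pow_left₀ (abs_nonneg _) h
  rwa [sq_abs, norm3_sq] at h2

lemma waveC_sq (hEOS : IsEOS pfun) {U : MHDState} (hU : U ∈ Gset) (ξ : Fin 2 → ℝ) :
    waveC pfun d2le3 ξ U ^ 2 =
      (soundC pfun U ^ 2 + sq3 (magB U) / dens U
        + Real.sqrt ((soundC pfun U ^ 2 + sq3 (magB U) / dens U) ^ 2
          - 4 * soundC pfun U ^ 2 * dirDot d2le3 ξ (magB U) ^ 2 / dens U)) / 2 := by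
  apply Real.sq_sqrt
  have h1 : 0 ≤ sq3 (magB U) / dens U := div_nonneg (sq3_nonneg _) hU.1.le
  have h2 := Real.sqrt_nonneg ((soundC pfun U ^ 2 + sq3 (magB U) / dens U) ^ 2
          - 4 * soundC pfun U ^ 2 * dirDot d2le3 ξ (magB U) ^ 2 / dens U)
  positivity

lemma waveC_pos (hEOS : IsEOS pfun) {U : MHDState} (hU : U ∈ Gset) (ξ : Fin 2 → ℝ) :
    0 < waveC pfun d2le3 ξ U := by
  have h0 : 0 ≤ waveC pfun d2le3 ξ U := Real.sqrt_nonneg _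
  have hs := waveC_sq hEOS hU ξ
  have hcs := soundC_pos hEOS hU
  have h1 : 0 ≤ sq3 (magB U) / dens U := div_nonneg (sq3_nonneg _) hU.1.le
  have h2 := Real.sqrt_nonneg ((soundC pfun U ^ 2 + sq3 (magB U) / dens U) ^ 2
          - 4 * soundC pfun U ^ 2 * dirDot d2le3 ξ (magB U) ^ 2 / dens U)
  rw [waveC]
  apply Real.sqrt_pos.2
  have hcs2 : 0 < soundC pfun U ^ 2 := pow_pos hcs 2
  linarith

lemma side_bound (hEOS : IsEOS pfun) {U : MHDState} (hU : U ∈ Gset) {ξ : Fin 2 → ℝ}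
    (hξ : unitVec ξ) (vs Bs : Fin 3 → ℝ) :
    |dirDot d2le3 ξ (magB U) * dot3 (fun k => vel U k - vs k) (fun k => magB U k - Bs k)
      - dirDot d2le3 ξ (fun k => vel U k - vs k) * dot3 (magB U) (fun k => magB U k - Bs k)
      - pres pfun U * dirDot d2le3 ξ (fun k => vel U k - vs k)|
    ≤ waveC pfun d2le3 ξ U *
        (dens U * sq3 (fun k => vel U k - vs k) / 2 + sq3 (fun k => magB U k - Bs k) / 2
          + intE U) := by
  have hρ : 0 < dens U := hU.1
  have hE : 0 < intE U := hU.2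
  have he : 0 < specE U := specE_pos hU
  have hp : 0 < pres pfun U := pres_pos hEOS hU
  have hξ1 : ξ 0 ^ 2 + ξ 1 ^ 2 = 1 := by simpa [unitVec, Fin.sum_univ_two] using hξ
  set u : Fin 3 → ℝ := fun k => vel U k - vs k with hu
  set b : Fin 3 → ℝ := fun k => magB U k - Bs k with hb
  set B : Fin 3 → ℝ := magB U with hB
  set ρ : ℝ := dens U with hρdef
  set p : ℝ := pres pfun U with hpdef
  set cs : ℝ := soundC pfun U with hcs
  set uξ : ℝ := dirDot d2le3 ξ u with huξ
  set bξ : ℝ := dirDot d2le3 ξ b with hbξ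
  set Bξ : ℝ := dirDot d2le3 ξ B with hBξ
  -- primed vectors
  set u' : Fin 3 → ℝ := ![u 0 - uξ * ξ 0, u 1 - uξ * ξ 1, u 2] with hu'
  set b' : Fin 3 → ℝ := ![b 0 - bξ * ξ 0, b 1 - bξ * ξ 1, b 2] with hb'
  set B' : Fin 3 → ℝ := ![B 0 - Bξ * ξ 0, B 1 - Bξ * ξ 1, B 2] with hB'
  have hux : uξ = ξ 0 * u 0 + ξ 1 * u 1 := dirDot_expand ξ u
  have hbx : bξ = ξ 0 * b 0 + ξ 1 * b 1 := dirDot_expand ξ b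
  have hBx : Bξ = ξ 0 * B 0 + ξ 1 * B 1 := dirDot_expand ξ B
  have fu : sq3 u' = sq3 u - uξ ^ 2 := by
    simp only [sq3_expand, hu']
    simp only [Matrix.cons_val_zero, Matrix.cons_val_one, Matrix.head_cons, Matrix.cons_val_two,
      Matrix.tail_cons]
    rw [hux]; linear_combination ((ξ 0 * u 0 + ξ 1 * u 1) ^ 2) * hξ1
  have fb : sq3 b' = sq3 b - bξ ^ 2 := by
    simp only [sq3_expand, hb']
    simp only [Matrix.cons_val_zero, Matrix.cons_val_one, Matrix.head_cons, Matrix.cons_val_two,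
      Matrix.tail_cons]
    rw [hbx]; linear_combination ((ξ 0 * b 0 + ξ 1 * b 1) ^ 2) * hξ1
  have fB : sq3 B' = sq3 B - Bξ ^ 2 := by
    simp only [sq3_expand, hB']
    simp only [Matrix.cons_val_zero, Matrix.cons_val_one, Matrix.head_cons, Matrix.cons_val_two,
      Matrix.tail_cons]
    rw [hBx]; linear_combination ((ξ 0 * B 0 + ξ 1 * B 1) ^ 2) * hξ1
  have fub : dot3 u' b' = dot3 u b - uξ * bξ := by
    simp only [dot3_expand, hu', hb']
    simp only [Matrix.cons_val_zero, Matrix.cons_val_one, Matrix.head_cons, Matrix.cons_val_two,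
      Matrix.tail_cons]
    rw [hux, hbx]; linear_combination ((ξ 0 * u 0 + ξ 1 * u 1) * (ξ 0 * b 0 + ξ 1 * b 1)) * hξ1
  have fBb : dot3 B' b' = dot3 B b - Bξ * bξ := by
    simp only [dot3_expand, hB', hb']
    simp only [Matrix.cons_val_zero, Matrix.cons_val_one, Matrix.head_cons, Matrix.cons_val_two,
      Matrix.tail_cons]
    rw [hBx, hbx]; linear_combination ((ξ 0 * B 0 + ξ 1 * B 1) * (ξ 0 * b 0 + ξ 1 * b 1)) * hξ1
  -- scalar data
  set C : ℝ := waveC pfun d2le3 ξ U with hC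
  have hCpos : 0 < C := waveC_pos hEOS hU ξ
  set sρ : ℝ := Real.sqrt ρ with hsρ
  have hsρpos : 0 < sρ := Real.sqrt_pos.2 hρ
  have hsρsq : sρ ^ 2 = ρ := Real.sq_sqrt hρ.le
  set t : ℝ := sρ * |uξ| with ht
  set τ : ℝ := sρ * Real.sqrt (sq3 u') with hτ
  set β : ℝ := Real.sqrt (sq3 b') with hβ
  set η : ℝ := Real.sqrt (2 * intE U) with hη
  set a1 : ℝ := Real.sqrt (sq3 B') / sρ with ha1
  set a3 : ℝ := |Bξ| / sρ with ha3
  have hPuu : 0 ≤ sq3 u' := sq3_nonneg _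
  have hPbb : 0 ≤ sq3 b' := sq3_nonneg _
  have hPBB : 0 ≤ sq3 B' := sq3_nonneg _
  -- the a-squares
  have ea1 : a1 ^ 2 = sq3 B' / ρ := by
    rw [ha1, div_pow, Real.sq_sqrt hPBB, hsρsq]
  have ea3 : a3 ^ 2 = Bξ ^ 2 / ρ := by
    rw [ha3, div_pow, sq_abs, hsρsq]
  have et : t ^ 2 = ρ * uξ ^ 2 := by rw [ht, mul_pow, sq_abs, hsρsq]
  have eτ : τ ^ 2 = ρ * sq3 u' := by rw [hτ, mul_pow, Real.sq_sqrt hPuu, hsρsq]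
  have eβ : β ^ 2 = sq3 b' := Real.sq_sqrt hPbb
  have eη : η ^ 2 = 2 * intE U := Real.sq_sqrt (by linarith)
  -- waveC conditions
  have hBle : Bξ ^ 2 ≤ sq3 B := Bxi_sq_le hξ B
  have hS : cs ^ 2 + sq3 B / ρ = a1 ^ 2 + cs ^ 2 + a3 ^ 2 := by
    rw [ea1, ea3, fB]; field_simp; ring
  have hinner : 0 ≤ (cs ^ 2 + sq3 B / ρ) ^ 2 - 4 * cs ^ 2 * Bξ ^ 2 / ρ := by
    have expand : (cs ^ 2 + sq3 B / ρ) ^ 2 - 4 * cs ^ 2 * Bξ ^ 2 / ρ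
        = ((sq3 B - Bξ ^ 2) / ρ + cs ^ 2 - Bξ ^ 2 / ρ) ^ 2
          + 4 * ((sq3 B - Bξ ^ 2) / ρ) * (Bξ ^ 2 / ρ) := by
      field_simp; ring
    rw [expand]
    have : 0 ≤ (sq3 B - Bξ ^ 2) / ρ := div_nonneg (by linarith) hρ.le
    positivity
  set r : ℝ := Real.sqrt ((cs ^ 2 + sq3 B / ρ) ^ 2 - 4 * cs ^ 2 * Bξ ^ 2 / ρ) with hr
  have hrn : 0 ≤ r := Real.sqrt_nonneg _
  have hrsq : r ^ 2 = (cs ^ 2 + sq3 B / ρ) ^ 2 - 4 * cs ^ 2 * Bξ ^ 2 / ρ := Real.sq_sqrt hinner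
  have hCsq : C ^ 2 = (cs ^ 2 + sq3 B / ρ + r) / 2 := waveC_sq hEOS hU ξ
  have ha2a3 : cs ^ 2 * a3 ^ 2 = cs ^ 2 * Bξ ^ 2 / ρ := by
    rw [ea3]; ring
  have hdet : a1 ^ 2 * a3 ^ 2 ≤ (C ^ 2 - a1 ^ 2 - cs ^ 2) * (C ^ 2 - a3 ^ 2) := by
    have hz : (C ^ 2 - a1 ^ 2 - cs ^ 2) * (C ^ 2 - a3 ^ 2) - a1 ^ 2 * a3 ^ 2 = 0 := by
      have e1 : C ^ 2 * C ^ 2 - (a1 ^ 2 + cs ^ 2 + a3 ^ 2) * C ^ 2 + cs ^ 2 * a3 ^ 2 = 0 := by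
        rw [← hS, hCsq, ha2a3]; linear_combination (1/4 : ℝ) * hrsq
      linear_combination e1
    linarith only [hz]
  have htr : a1 ^ 2 + cs ^ 2 + a3 ^ 2 ≤ 2 * C ^ 2 := by
    rw [← hS, hCsq]; linarith
  -- CS bounds
  have csub : |dot3 u' b'| ≤ Real.sqrt (sq3 u') * β := by
    apply abs_le_of_sq _ (by positivity)
    rw [mul_pow, Real.sq_sqrt hPuu, eβ]; exact dot3_sq_le u' b'
  have csBb : |dot3 B' b'| ≤ Real.sqrt (sq3 B') * β := by
    apply abs_le_of_sq _ (by positivity)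
    rw [mul_pow, Real.sq_sqrt hPBB, eβ]; exact dot3_sq_le B' b'
  -- the main chain
  have hcspos : 0 < cs := by rw [hcs]; exact soundC_pos hEOS hU
  have ident : Bξ * dot3 u b - uξ * dot3 B b - p * uξ
      = Bξ * dot3 u' b' - uξ * dot3 B' b' - p * uξ := by
    rw [fub, fBb]; ring
  have amul3 : a3 * τ * β = |Bξ| * (Real.sqrt (sq3 u') * β) := by
    rw [ha3, hτ]; field_simp
  have amul1 : a1 * t * β = |uξ| * (Real.sqrt (sq3 B') * β) := by
    rw [ha1, ht]; field_simp
  have amul2 : cs * t * η = p * |uξ| := by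
    have hses : η = sρ * Real.sqrt (2 * specE U) := by
      rw [hη, hsρ, ← Real.sqrt_mul hρ.le]
      congr 1
      rw [hρdef, specE]
      field_simp
      exact (div_self hU.1.ne').symm
    have h2e : (0:ℝ) < Real.sqrt (2 * specE U) := Real.sqrt_pos.2 (by linarith)
    rw [hcs, soundC, hses, ht, hsρ, ← hρdef, ← hpdef]
    have hss : Real.sqrt ρ * Real.sqrt ρ = ρ := Real.mul_self_sqrt hρ.le
    have hsρne : Real.sqrt ρ ≠ 0 := by positivity
    field_simp
    linear_combination |uξ| * hss
  have habs : |Bξ * dot3 u b - uξ * dot3 B b - p * uξ|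
      ≤ a1 * t * β + cs * t * η + a3 * τ * β := by
    rw [ident]
    have e1 : Bξ * dot3 u' b' - uξ * dot3 B' b' - p * uξ
        = Bξ * dot3 u' b' + -(uξ * dot3 B' b') + -(p * uξ) := by ring
    rw [e1]
    have h2 := (abs_add_le (Bξ * dot3 u' b' + -(uξ * dot3 B' b')) (-(p * uξ))).trans
      (add_le_add_left (abs_add_le (Bξ * dot3 u' b') (-(uξ * dot3 B' b'))) _)
    simp only [abs_neg, abs_mul] at h2
    have c3 : |Bξ| * |dot3 u' b'| ≤ a3 * τ * β := by
      rw [amul3]; exact mul_le_mul_of_nonneg_left csub (abs_nonneg _)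
    have c1 : |uξ| * |dot3 B' b'| ≤ a1 * t * β := by
      rw [amul1]; exact mul_le_mul_of_nonneg_left csBb (abs_nonneg _)
    have c2 : |p| * |uξ| = cs * t * η := by rw [abs_of_pos hp, amul2]
    linarith only [h2, c3, c1, c2]
  have hcore := core_quad a1 cs a3 C t τ β η
    (by rw [ha1]; positivity) hcspos.le (by rw [ha3]; positivity)
    hCpos.le (by rw [ht]; positivity) (by rw [hτ]; positivity) (Real.sqrt_nonneg _)
    (Real.sqrt_nonneg _) hdet htr
  have hfin : C * (t ^ 2 + τ ^ 2 + β ^ 2 + η ^ 2) / 2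
      ≤ C * (ρ * sq3 u / 2 + sq3 b / 2 + intE U) := by
    have heq : C * (t ^ 2 + τ ^ 2 + β ^ 2 + η ^ 2) / 2 + C * bξ ^ 2 / 2
        = C * (ρ * sq3 u / 2 + sq3 b / 2 + intE U) := by
      rw [et, eτ, eβ, eη, fu, fb]; ring
    have h0 : 0 ≤ C * bξ ^ 2 / 2 := by positivity
    linarith only [heq, h0]
  calc |Bξ * dot3 u b - uξ * dot3 B b - p * uξ|
      ≤ a1 * t * β + cs * t * η + a3 * τ * β := habs
    _ ≤ C * (t ^ 2 + τ ^ 2 + β ^ 2 + η ^ 2) / 2 := hcore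
    _ ≤ C * (ρ * sq3 u / 2 + sq3 b / 2 + intE U) := hfin
end SideBound
section Theta

lemma thetaCore {Qp Qm X Y Z Rp Rm Cp Cm D sp sm s dv wxi σp vpxi vmxi σm : ℝ}
    (hs : 0 < s) (hsp : 0 ≤ sp) (hsm : 0 ≤ sm)
    (hQpX : X / 2 ≤ Qp) (hQmY : Y / 2 ≤ Qm) (hX : 0 ≤ X) (hY : 0 ≤ Y)
    (hQp : 0 ≤ Qp) (hQm : 0 ≤ Qm)
    (hCp : 0 ≤ Cp) (hCm : 0 ≤ Cm) (hD : 0 ≤ D)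
    (hAp : max 0 (-(dv * sm) / s) + Cp + D ≤ σp - vpxi)
    (hAm : max 0 (-(dv * sp) / s) + Cm + D ≤ vmxi - σm)
    (hRp : |Rp| ≤ Cp * Qp) (hRm : |Rm| ≤ Cm * Qm)
    (hB3 : 0 ≤ D * Qp + D * Qm + wxi * Z / 2) :
    0 ≤ (σp - vpxi) * Qp + (vmxi - σm) * Qm
      + (wxi * Z / 2 + dv * (sm * X + sp * Y) / (2 * s)) + Rp - Rm := by
  set mp : ℝ := max 0 (-(dv * sm) / s) with hmp
  set mm : ℝ := max 0 (-(dv * sp) / s) with hmm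
  have hmp0 : 0 ≤ mp := le_max_left _ _
  have hmm0 : 0 ≤ mm := le_max_left _ _
  have A1 : (mp + Cp + D) * Qp ≤ (σp - vpxi) * Qp := mul_le_mul_of_nonneg_right hAp hQp
  have A2 : (mm + Cm + D) * Qm ≤ (vmxi - σm) * Qm := mul_le_mul_of_nonneg_right hAm hQm
  have A1e : (mp + Cp + D) * Qp = mp * Qp + Cp * Qp + D * Qp := by ring
  have A2e : (mm + Cm + D) * Qm = mm * Qm + Cm * Qm + D * Qm := by ring
  have B1 : 0 ≤ mp * Qp + dv * sm * X / (2 * s) := by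
    rcases le_or_gt 0 dv with h | h
    · have h1 : 0 ≤ dv * sm * X / (2 * s) :=
        div_nonneg (mul_nonneg (mul_nonneg h hsm) hX) (by linarith)
      have h2 : 0 ≤ mp * Qp := mul_nonneg hmp0 hQp
      linarith
    · have harg : 0 ≤ -(dv * sm) / s :=
        div_nonneg (by nlinarith) hs.le
      have hmpe : mp = -(dv * sm) / s := max_eq_right harg
      have h2 : -(dv * sm) / s * (X / 2) ≤ -(dv * sm) / s * Qp :=
        mul_le_mul_of_nonneg_left hQpX harg
      have h3 : -(dv * sm) / s * (X / 2) = -(dv * sm * X / (2 * s)) := by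
        ring
      rw [hmpe]
      linarith
  have B2 : 0 ≤ mm * Qm + dv * sp * Y / (2 * s) := by
    rcases le_or_gt 0 dv with h | h
    · have h1 : 0 ≤ dv * sp * Y / (2 * s) :=
        div_nonneg (mul_nonneg (mul_nonneg h hsp) hY) (by linarith)
      have h2 : 0 ≤ mm * Qm := mul_nonneg hmm0 hQm
      linarith
    · have harg : 0 ≤ -(dv * sp) / s :=
        div_nonneg (by nlinarith) hs.le
      have hmme : mm = -(dv * sp) / s := max_eq_right harg
      have h2 : -(dv * sp) / s * (Y / 2) ≤ -(dv * sp) / s * Qm :=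
        mul_le_mul_of_nonneg_left hQmY harg
      have h3 : -(dv * sp) / s * (Y / 2) = -(dv * sp * Y / (2 * s)) := by
        ring
      rw [hmme]
      linarith
  have B4p : -(Cp * Qp) ≤ Rp := neg_le_of_abs_le hRp
  have B4m : Rm ≤ Cm * Qm := le_of_abs_le hRm
  have Ee : dv * (sm * X + sp * Y) / (2 * s) = dv * sm * X / (2 * s) + dv * sp * Y / (2 * s) := by
    ring
  linarith only [A1, A2, A1e, A2e, B1, B2, B4p, B4m, hB3, Ee]

end Theta
section Interface
set_option maxHeartbeats 3200000
variable {pfun : ℝ → ℝ → ℝ}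

lemma max_shift (a b : ℝ) : max a b = a + max 0 (b - a) := by
  rcases le_total b a with h | h
  · rw [max_eq_left h, max_eq_left (by linarith)]; ring
  · rw [max_eq_right h, max_eq_right (by linarith)]; ring

lemma min_shift (a b : ℝ) : min a b = a - max 0 (a - b) := by
  rcases le_total b a with h | h
  · rw [min_eq_right h, max_eq_right (by linarith)]; ring
  · rw [min_eq_left h, max_eq_left (by linarith)]; ring

lemma dirDot_sub (ξ : Fin 2 → ℝ) (a b : Fin 3 → ℝ) :
    dirDot d2le3 ξ (fun k => a k - b k) = dirDot d2le3 ξ a - dirDot d2le3 ξ b := by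
  simp only [dirDot_expand]; ring

lemma interface (hEOS : IsEOS pfun) {ξ : Fin 2 → ℝ} (hξ : unitVec ξ)
    {Um Up : MHDState} (hm : Um ∈ Gset) (hp : Up ∈ Gset) {σm σp : ℝ}
    (hσm0 : σm ≤ 0) (hσp0 : 0 ≤ σp)
    (hσp : alphaR pfun d2le3 ξ Up Um ≤ σp)
    (hσm : σm ≤ alphaL pfun d2le3 ξ Um Up) (vs Bs : Fin 3 → ℝ) :
    dot3 vs Bs * (dirDot d2le3 ξ (magB Um) - dirDot d2le3 ξ (magB Up))
      ≤ σp * (dot8 Up (nstar vs Bs) + sq3 Bs / 2)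
        - σm * (dot8 Um (nstar vs Bs) + sq3 Bs / 2)
        - dot8 (dirFlux pfun d2le3 ξ Up) (nstar vs Bs)
        + dot8 (dirFlux pfun d2le3 ξ Um) (nstar vs Bs) := by
  have hρp : 0 < dens Up := hp.1
  have hρm : 0 < dens Um := hm.1
  have hEp : 0 < intE Up := hp.2
  have hEm : 0 < intE Um := hm.2
  have hsppos : 0 < Real.sqrt (dens Up) := Real.sqrt_pos.2 hρp
  have hsmpos : 0 < Real.sqrt (dens Um) := Real.sqrt_pos.2 hρm
  have hspos : 0 < (Real.sqrt (dens Up) + Real.sqrt (dens Um)) := by linarith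
  have hsne : (Real.sqrt (dens Up) + Real.sqrt (dens Um)) ≠ 0 := ne_of_gt hspos
  have hsp2 : Real.sqrt (dens Up) ^ 2 = dens Up := Real.sq_sqrt hρp.le
  have hsm2 : Real.sqrt (dens Um) ^ 2 = dens Um := Real.sq_sqrt hρm.le
  have hCp0 : 0 < waveC pfun d2le3 ξ Up := waveC_pos hEOS hp ξ
  have hCm0 : 0 < waveC pfun d2le3 ξ Um := waveC_pos hEOS hm ξ
  have hnD0 : 0 ≤ norm3 (magB Up - magB Um) := norm3_nonneg _
  have hD0 : 0 ≤ (norm3 (magB Up - magB Um) / (Real.sqrt (dens Up) + Real.sqrt (dens Um))) := div_nonneg hnD0 hspos.le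
  -- Roe averages
  have hroeP : (Real.sqrt (dens Up) + Real.sqrt (dens Um)) * dirDot d2le3 ξ (roeV Up Um) = Real.sqrt (dens Up) * dirDot d2le3 ξ (vel Up) + Real.sqrt (dens Um) * dirDot d2le3 ξ (vel Um) := by
    simp only [roeV, dirDot_expand, vel]
    field_simp
    ring
  have hroeM : (Real.sqrt (dens Up) + Real.sqrt (dens Um)) * dirDot d2le3 ξ (roeV Um Up) = Real.sqrt (dens Up) * dirDot d2le3 ξ (vel Up) + Real.sqrt (dens Um) * dirDot d2le3 ξ (vel Um) := by
    simp only [roeV, dirDot_expand, vel]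
    field_simp
    ring
  have hgapP : dirDot d2le3 ξ (roeV Up Um) - dirDot d2le3 ξ (vel Up) = -((dirDot d2le3 ξ (vel Up) - dirDot d2le3 ξ (vel Um)) * Real.sqrt (dens Um)) / (Real.sqrt (dens Up) + Real.sqrt (dens Um)) := by
    rw [eq_div_iff hsne]
    linear_combination hroeP
  have hgapM : dirDot d2le3 ξ (vel Um) - dirDot d2le3 ξ (roeV Um Up) = -((dirDot d2le3 ξ (vel Up) - dirDot d2le3 ξ (vel Um)) * Real.sqrt (dens Up)) / (Real.sqrt (dens Up) + Real.sqrt (dens Um)) := by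
    rw [eq_div_iff hsne]
    linear_combination (-1 : ℝ) * hroeM
  -- norm symmetry
  have hnBsym : norm3 (magB Um - magB Up) = norm3 (magB Up - magB Um) := by
    unfold norm3
    congr 1
    simp only [sq3_expand, Pi.sub_apply]
    ring
  -- speed bounds
  have hAp : max 0 (-((dirDot d2le3 ξ (vel Up) - dirDot d2le3 ξ (vel Um)) * Real.sqrt (dens Um)) / (Real.sqrt (dens Up) + Real.sqrt (dens Um))) + waveC pfun d2le3 ξ Up + (norm3 (magB Up - magB Um) / (Real.sqrt (dens Up) + Real.sqrt (dens Um))) ≤ σp - dirDot d2le3 ξ (vel Up) := by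
    have h := hσp
    unfold alphaR at h
    rw [max_shift, hgapP] at h
    linarith
  have hAm : max 0 (-((dirDot d2le3 ξ (vel Up) - dirDot d2le3 ξ (vel Um)) * Real.sqrt (dens Up)) / (Real.sqrt (dens Up) + Real.sqrt (dens Um))) + waveC pfun d2le3 ξ Um + (norm3 (magB Up - magB Um) / (Real.sqrt (dens Up) + Real.sqrt (dens Um))) ≤ dirDot d2le3 ξ (vel Um) - σm := by
    have h := hσm
    unfold alphaL at h
    rw [min_shift, hgapM, hnBsym,
      show Real.sqrt (dens Um) + Real.sqrt (dens Up) = Real.sqrt (dens Up) + Real.sqrt (dens Um) from add_comm _ _] at h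
    linarith
  -- side bounds
  have hRp := side_bound hEOS hp hξ vs Bs
  have hRm := side_bound hEOS hm hξ vs Bs
  -- Q facts
  have hQp0 : 0 ≤ (dens Up * sq3 (fun k => vel Up k - vs k) / 2 + sq3 (fun k => magB Up k - Bs k) / 2 + intE Up) := by
    have h1 : 0 ≤ dens Up * sq3 (fun k => vel Up k - vs k) := mul_nonneg hρp.le (sq3_nonneg _)
    have h2 := sq3_nonneg (fun k => magB Up k - Bs k)
    linarith
  have hQm0 : 0 ≤ (dens Um * sq3 (fun k => vel Um k - vs k) / 2 + sq3 (fun k => magB Um k - Bs k) / 2 + intE Um) := by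
    have h1 : 0 ≤ dens Um * sq3 (fun k => vel Um k - vs k) := mul_nonneg hρm.le (sq3_nonneg _)
    have h2 := sq3_nonneg (fun k => magB Um k - Bs k)
    linarith
  have hQpX : sq3 (fun k => magB Up k - Bs k) / 2 ≤ (dens Up * sq3 (fun k => vel Up k - vs k) / 2 + sq3 (fun k => magB Up k - Bs k) / 2 + intE Up) := by
    have h1 : 0 ≤ dens Up * sq3 (fun k => vel Up k - vs k) := mul_nonneg hρp.le (sq3_nonneg _)
    linarith
  have hQmY : sq3 (fun k => magB Um k - Bs k) / 2 ≤ (dens Um * sq3 (fun k => vel Um k - vs k) / 2 + sq3 (fun k => magB Um k - Bs k) / 2 + intE Um) := by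
    have h1 : 0 ≤ dens Um * sq3 (fun k => vel Um k - vs k) := mul_nonneg hρm.le (sq3_nonneg _)
    linarith
  -- B3 bound
  have hdBfun : (fun k => magB Up k - magB Um k) = magB Up - magB Um := rfl
  have habsZ : |(dot3 (fun k => magB Up k - magB Um k) (fun k => magB Up k - Bs k) + dot3 (fun k => magB Up k - magB Um k) (fun k => magB Um k - Bs k))| ≤ norm3 (magB Up - magB Um) * (norm3 (fun k => magB Up k - Bs k) + norm3 (fun k => magB Um k - Bs k)) := by
    have h1 := abs_dot3_le (fun k => magB Up k - magB Um k) (fun k => magB Up k - Bs k)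
    have h2 := abs_dot3_le (fun k => magB Up k - magB Um k) (fun k => magB Um k - Bs k)
    rw [hdBfun] at h1 h2
    calc |(dot3 (fun k => magB Up k - magB Um k) (fun k => magB Up k - Bs k) + dot3 (fun k => magB Up k - magB Um k) (fun k => magB Um k - Bs k))| ≤ |dot3 (fun k => magB Up k - magB Um k) (fun k => magB Up k - Bs k)| + |dot3 (fun k => magB Up k - magB Um k) (fun k => magB Um k - Bs k)| := abs_add_le _ _
      _ ≤ norm3 (magB Up - magB Um) * norm3 (fun k => magB Up k - Bs k) + norm3 (magB Up - magB Um) * norm3 (fun k => magB Um k - Bs k) := add_le_add h1 h2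
      _ = norm3 (magB Up - magB Um) * (norm3 (fun k => magB Up k - Bs k) + norm3 (fun k => magB Um k - Bs k)) := by ring
  have hupxe : dirDot d2le3 ξ (fun k => vel Up k - vs k) = dirDot d2le3 ξ (vel Up) - dirDot d2le3 ξ vs := dirDot_sub ξ (vel Up) vs
  have humxe : dirDot d2le3 ξ (fun k => vel Um k - vs k) = dirDot d2le3 ξ (vel Um) - dirDot d2le3 ξ vs := dirDot_sub ξ (vel Um) vs
  have hswe : (Real.sqrt (dens Up) + Real.sqrt (dens Um)) * (dirDot d2le3 ξ (roeV Up Um) - dirDot d2le3 ξ vs) = Real.sqrt (dens Up) * dirDot d2le3 ξ (fun k => vel Up k - vs k) + Real.sqrt (dens Um) * dirDot d2le3 ξ (fun k => vel Um k - vs k) := by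
    rw [hupxe, humxe]
    linear_combination hroeP
  have habsw : (Real.sqrt (dens Up) + Real.sqrt (dens Um)) * |(dirDot d2le3 ξ (roeV Up Um) - dirDot d2le3 ξ vs)| ≤ Real.sqrt (dens Up) * norm3 (fun k => vel Up k - vs k) + Real.sqrt (dens Um) * norm3 (fun k => vel Um k - vs k) := by
    have h1 : (Real.sqrt (dens Up) + Real.sqrt (dens Um)) * |(dirDot d2le3 ξ (roeV Up Um) - dirDot d2le3 ξ vs)| = |(Real.sqrt (dens Up) + Real.sqrt (dens Um)) * (dirDot d2le3 ξ (roeV Up Um) - dirDot d2le3 ξ vs)| := by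
      rw [abs_mul, abs_of_pos hspos]
    rw [h1, hswe]
    calc |Real.sqrt (dens Up) * dirDot d2le3 ξ (fun k => vel Up k - vs k) + Real.sqrt (dens Um) * dirDot d2le3 ξ (fun k => vel Um k - vs k)|
        ≤ |Real.sqrt (dens Up) * dirDot d2le3 ξ (fun k => vel Up k - vs k)| + |Real.sqrt (dens Um) * dirDot d2le3 ξ (fun k => vel Um k - vs k)| := abs_add_le _ _
      _ = Real.sqrt (dens Up) * |dirDot d2le3 ξ (fun k => vel Up k - vs k)| + Real.sqrt (dens Um) * |dirDot d2le3 ξ (fun k => vel Um k - vs k)| := by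
          rw [abs_mul, abs_mul, abs_of_pos hsppos, abs_of_pos hsmpos]
      _ ≤ Real.sqrt (dens Up) * norm3 (fun k => vel Up k - vs k) + Real.sqrt (dens Um) * norm3 (fun k => vel Um k - vs k) := by
          have g1 := abs_dirDot_le hξ (fun k => vel Up k - vs k)
          have g2 := abs_dirDot_le hξ (fun k => vel Um k - vs k)
          have := mul_le_mul_of_nonneg_left g1 hsppos.le
          have := mul_le_mul_of_nonneg_left g2 hsmpos.le
          linarith
  have hamgm : (Real.sqrt (dens Up) * norm3 (fun k => vel Up k - vs k) + Real.sqrt (dens Um) * norm3 (fun k => vel Um k - vs k)) * (norm3 (fun k => magB Up k - Bs k) + norm3 (fun k => magB Um k - Bs k))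
      ≤ (dens Up * norm3 (fun k => vel Up k - vs k) ^ 2 + dens Um * norm3 (fun k => vel Um k - vs k) ^ 2 + norm3 (fun k => magB Up k - Bs k) ^ 2 + norm3 (fun k => magB Um k - Bs k) ^ 2) := by
    have a1 : Real.sqrt (dens Up) * norm3 (fun k => vel Up k - vs k) * norm3 (fun k => magB Up k - Bs k) ≤ (dens Up * norm3 (fun k => vel Up k - vs k) ^ 2 + norm3 (fun k => magB Up k - Bs k) ^ 2) / 2 := by
      nlinarith [sq_nonneg (Real.sqrt (dens Up) * norm3 (fun k => vel Up k - vs k) - norm3 (fun k => magB Up k - Bs k)), hsp2]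
    have a2 : Real.sqrt (dens Up) * norm3 (fun k => vel Up k - vs k) * norm3 (fun k => magB Um k - Bs k) ≤ (dens Up * norm3 (fun k => vel Up k - vs k) ^ 2 + norm3 (fun k => magB Um k - Bs k) ^ 2) / 2 := by
      nlinarith [sq_nonneg (Real.sqrt (dens Up) * norm3 (fun k => vel Up k - vs k) - norm3 (fun k => magB Um k - Bs k)), hsp2]
    have a3 : Real.sqrt (dens Um) * norm3 (fun k => vel Um k - vs k) * norm3 (fun k => magB Up k - Bs k) ≤ (dens Um * norm3 (fun k => vel Um k - vs k) ^ 2 + norm3 (fun k => magB Up k - Bs k) ^ 2) / 2 := by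
      nlinarith [sq_nonneg (Real.sqrt (dens Um) * norm3 (fun k => vel Um k - vs k) - norm3 (fun k => magB Up k - Bs k)), hsm2]
    have a4 : Real.sqrt (dens Um) * norm3 (fun k => vel Um k - vs k) * norm3 (fun k => magB Um k - Bs k) ≤ (dens Um * norm3 (fun k => vel Um k - vs k) ^ 2 + norm3 (fun k => magB Um k - Bs k) ^ 2) / 2 := by
      nlinarith [sq_nonneg (Real.sqrt (dens Um) * norm3 (fun k => vel Um k - vs k) - norm3 (fun k => magB Um k - Bs k)), hsm2]
    nlinarith [a1, a2, a3, a4]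
  have hB3 : 0 ≤ (norm3 (magB Up - magB Um) / (Real.sqrt (dens Up) + Real.sqrt (dens Um))) * (dens Up * sq3 (fun k => vel Up k - vs k) / 2 + sq3 (fun k => magB Up k - Bs k) / 2 + intE Up) + (norm3 (magB Up - magB Um) / (Real.sqrt (dens Up) + Real.sqrt (dens Um))) * (dens Um * sq3 (fun k => vel Um k - vs k) / 2 + sq3 (fun k => magB Um k - Bs k) / 2 + intE Um) + (dirDot d2le3 ξ (roeV Up Um) - dirDot d2le3 ξ vs) * (dot3 (fun k => magB Up k - magB Um k) (fun k => magB Up k - Bs k) + dot3 (fun k => magB Up k - magB Um k) (fun k => magB Um k - Bs k)) / 2 := by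
    have hnup0 : 0 ≤ norm3 (fun k => vel Up k - vs k) := norm3_nonneg _
    have hnum0 : 0 ≤ norm3 (fun k => vel Um k - vs k) := norm3_nonneg _
    have hnbp0 : 0 ≤ norm3 (fun k => magB Up k - Bs k) := norm3_nonneg _
    have hnbm0 : 0 ≤ norm3 (fun k => magB Um k - Bs k) := norm3_nonneg _
    have c1 : |(dirDot d2le3 ξ (roeV Up Um) - dirDot d2le3 ξ vs)| * |(dot3 (fun k => magB Up k - magB Um k) (fun k => magB Up k - Bs k) + dot3 (fun k => magB Up k - magB Um k) (fun k => magB Um k - Bs k))| ≤ |(dirDot d2le3 ξ (roeV Up Um) - dirDot d2le3 ξ vs)| * (norm3 (magB Up - magB Um) * (norm3 (fun k => magB Up k - Bs k) + norm3 (fun k => magB Um k - Bs k))) :=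
      mul_le_mul_of_nonneg_left habsZ (abs_nonneg _)
    have c2 : (Real.sqrt (dens Up) + Real.sqrt (dens Um)) * (|(dirDot d2le3 ξ (roeV Up Um) - dirDot d2le3 ξ vs)| * (norm3 (magB Up - magB Um) * (norm3 (fun k => magB Up k - Bs k) + norm3 (fun k => magB Um k - Bs k))))
        = ((Real.sqrt (dens Up) + Real.sqrt (dens Um)) * |(dirDot d2le3 ξ (roeV Up Um) - dirDot d2le3 ξ vs)|) * (norm3 (magB Up - magB Um) * (norm3 (fun k => magB Up k - Bs k) + norm3 (fun k => magB Um k - Bs k))) := by ring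
    have c3 : ((Real.sqrt (dens Up) + Real.sqrt (dens Um)) * |(dirDot d2le3 ξ (roeV Up Um) - dirDot d2le3 ξ vs)|) * (norm3 (magB Up - magB Um) * (norm3 (fun k => magB Up k - Bs k) + norm3 (fun k => magB Um k - Bs k)))
        ≤ (Real.sqrt (dens Up) * norm3 (fun k => vel Up k - vs k) + Real.sqrt (dens Um) * norm3 (fun k => vel Um k - vs k)) * (norm3 (magB Up - magB Um) * (norm3 (fun k => magB Up k - Bs k) + norm3 (fun k => magB Um k - Bs k))) := by
      apply mul_le_mul_of_nonneg_right habsw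
      positivity
    have c4 : (Real.sqrt (dens Up) * norm3 (fun k => vel Up k - vs k) + Real.sqrt (dens Um) * norm3 (fun k => vel Um k - vs k)) * (norm3 (magB Up - magB Um) * (norm3 (fun k => magB Up k - Bs k) + norm3 (fun k => magB Um k - Bs k)))
        = norm3 (magB Up - magB Um) * ((Real.sqrt (dens Up) * norm3 (fun k => vel Up k - vs k) + Real.sqrt (dens Um) * norm3 (fun k => vel Um k - vs k)) * (norm3 (fun k => magB Up k - Bs k) + norm3 (fun k => magB Um k - Bs k))) := by ring
    have c5 : norm3 (magB Up - magB Um) * ((Real.sqrt (dens Up) * norm3 (fun k => vel Up k - vs k) + Real.sqrt (dens Um) * norm3 (fun k => vel Um k - vs k)) * (norm3 (fun k => magB Up k - Bs k) + norm3 (fun k => magB Um k - Bs k)))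
        ≤ norm3 (magB Up - magB Um) * (dens Up * norm3 (fun k => vel Up k - vs k) ^ 2 + dens Um * norm3 (fun k => vel Um k - vs k) ^ 2 + norm3 (fun k => magB Up k - Bs k) ^ 2 + norm3 (fun k => magB Um k - Bs k) ^ 2) := mul_le_mul_of_nonneg_left hamgm hnD0
    have c6 : (Real.sqrt (dens Up) + Real.sqrt (dens Um)) * (|(dirDot d2le3 ξ (roeV Up Um) - dirDot d2le3 ξ vs)| * |(dot3 (fun k => magB Up k - magB Um k) (fun k => magB Up k - Bs k) + dot3 (fun k => magB Up k - magB Um k) (fun k => magB Um k - Bs k))|) ≤ norm3 (magB Up - magB Um) * (dens Up * norm3 (fun k => vel Up k - vs k) ^ 2 + dens Um * norm3 (fun k => vel Um k - vs k) ^ 2 + norm3 (fun k => magB Up k - Bs k) ^ 2 + norm3 (fun k => magB Um k - Bs k) ^ 2) := by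
      have := mul_le_mul_of_nonneg_left c1 hspos.le
      linarith [c2 ▸ this, c3, c4 ▸ c5]
    have c7 : |(dirDot d2le3 ξ (roeV Up Um) - dirDot d2le3 ξ vs)| * |(dot3 (fun k => magB Up k - magB Um k) (fun k => magB Up k - Bs k) + dot3 (fun k => magB Up k - magB Um k) (fun k => magB Um k - Bs k))| ≤ norm3 (magB Up - magB Um) * (dens Up * norm3 (fun k => vel Up k - vs k) ^ 2 + dens Um * norm3 (fun k => vel Um k - vs k) ^ 2 + norm3 (fun k => magB Up k - Bs k) ^ 2 + norm3 (fun k => magB Um k - Bs k) ^ 2) / (Real.sqrt (dens Up) + Real.sqrt (dens Um)) := by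
      rw [le_div_iff₀ hspos]
      linarith [c6]
    have c8 : norm3 (magB Up - magB Um) * (dens Up * norm3 (fun k => vel Up k - vs k) ^ 2 + dens Um * norm3 (fun k => vel Um k - vs k) ^ 2 + norm3 (fun k => magB Up k - Bs k) ^ 2 + norm3 (fun k => magB Um k - Bs k) ^ 2) / (Real.sqrt (dens Up) + Real.sqrt (dens Um)) = (norm3 (magB Up - magB Um) / (Real.sqrt (dens Up) + Real.sqrt (dens Um))) * (dens Up * norm3 (fun k => vel Up k - vs k) ^ 2 + dens Um * norm3 (fun k => vel Um k - vs k) ^ 2 + norm3 (fun k => magB Up k - Bs k) ^ 2 + norm3 (fun k => magB Um k - Bs k) ^ 2) := by ring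
    have hQW : (dens Up * norm3 (fun k => vel Up k - vs k) ^ 2 + dens Um * norm3 (fun k => vel Um k - vs k) ^ 2 + norm3 (fun k => magB Up k - Bs k) ^ 2 + norm3 (fun k => magB Um k - Bs k) ^ 2) / 2 ≤ (dens Up * sq3 (fun k => vel Up k - vs k) / 2 + sq3 (fun k => magB Up k - Bs k) / 2 + intE Up) + (dens Um * sq3 (fun k => vel Um k - vs k) / 2 + sq3 (fun k => magB Um k - Bs k) / 2 + intE Um) := by
      have e1 : norm3 (fun k => vel Up k - vs k) ^ 2 = sq3 (fun k => vel Up k - vs k) := norm3_sq _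
      have e2 : norm3 (fun k => vel Um k - vs k) ^ 2 = sq3 (fun k => vel Um k - vs k) := norm3_sq _
      have e3 : norm3 (fun k => magB Up k - Bs k) ^ 2 = sq3 (fun k => magB Up k - Bs k) := norm3_sq _
      have e4 : norm3 (fun k => magB Um k - Bs k) ^ 2 = sq3 (fun k => magB Um k - Bs k) := norm3_sq _
      rw [e1, e2, e3, e4]
      linarith
    have c9 : (norm3 (magB Up - magB Um) / (Real.sqrt (dens Up) + Real.sqrt (dens Um))) * ((dens Up * norm3 (fun k => vel Up k - vs k) ^ 2 + dens Um * norm3 (fun k => vel Um k - vs k) ^ 2 + norm3 (fun k => magB Up k - Bs k) ^ 2 + norm3 (fun k => magB Um k - Bs k) ^ 2) / 2) ≤ (norm3 (magB Up - magB Um) / (Real.sqrt (dens Up) + Real.sqrt (dens Um))) * ((dens Up * sq3 (fun k => vel Up k - vs k) / 2 + sq3 (fun k => magB Up k - Bs k) / 2 + intE Up) + (dens Um * sq3 (fun k => vel Um k - vs k) / 2 + sq3 (fun k => magB Um k - Bs k) / 2 + intE Um)) :=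
      mul_le_mul_of_nonneg_left hQW hD0
    have c10 : -((dirDot d2le3 ξ (roeV Up Um) - dirDot d2le3 ξ vs) * (dot3 (fun k => magB Up k - magB Um k) (fun k => magB Up k - Bs k) + dot3 (fun k => magB Up k - magB Um k) (fun k => magB Um k - Bs k))) ≤ |(dirDot d2le3 ξ (roeV Up Um) - dirDot d2le3 ξ vs)| * |(dot3 (fun k => magB Up k - magB Um k) (fun k => magB Up k - Bs k) + dot3 (fun k => magB Up k - magB Um k) (fun k => magB Um k - Bs k))| := by
      rw [← abs_mul]
      exact neg_le_abs _
    have c11 : (norm3 (magB Up - magB Um) / (Real.sqrt (dens Up) + Real.sqrt (dens Um))) * ((dens Up * norm3 (fun k => vel Up k - vs k) ^ 2 + dens Um * norm3 (fun k => vel Um k - vs k) ^ 2 + norm3 (fun k => magB Up k - Bs k) ^ 2 + norm3 (fun k => magB Um k - Bs k) ^ 2) / 2) = (norm3 (magB Up - magB Um) / (Real.sqrt (dens Up) + Real.sqrt (dens Um))) * (dens Up * norm3 (fun k => vel Up k - vs k) ^ 2 + dens Um * norm3 (fun k => vel Um k - vs k) ^ 2 + norm3 (fun k => magB Up k - Bs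 k) ^ 2 + norm3 (fun k => magB Um k - Bs k) ^ 2) / 2 := by ring
    have c12 : (norm3 (magB Up - magB Um) / (Real.sqrt (dens Up) + Real.sqrt (dens Um))) * ((dens Up * sq3 (fun k => vel Up k - vs k) / 2 + sq3 (fun k => magB Up k - Bs k) / 2 + intE Up) + (dens Um * sq3 (fun k => vel Um k - vs k) / 2 + sq3 (fun k => magB Um k - Bs k) / 2 + intE Um)) = (norm3 (magB Up - magB Um) / (Real.sqrt (dens Up) + Real.sqrt (dens Um))) * (dens Up * sq3 (fun k => vel Up k - vs k) / 2 + sq3 (fun k => magB Up k - Bs k) / 2 + intE Up) + (norm3 (magB Up - magB Um) / (Real.sqrt (dens Up) + Real.sqrt (dens Um))) * (dens Um * sq3 (fun k => vel Um k - vs k) / 2 + sq3 (fun k => magB Um k - Bs k) / 2 + intE Um) := by ring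
    linarith [c7, c9, c10, c11, c12]
  -- core inequality
  have hcore := thetaCore hspos hsppos.le hsmpos.le hQpX hQmY (sq3_nonneg (fun k => magB Up k - Bs k))
    (sq3_nonneg (fun k => magB Um k - Bs k)) hQp0 hQm0 hCp0.le hCm0.le hD0 hAp hAm hRp hRm hB3
  -- key algebraic identity
  have e1p : dot8 Up (nstar vs Bs) = (dens Up * sq3 (fun k => vel Up k - vs k) / 2 + sq3 (fun k => magB Up k - Bs k) / 2 + intE Up) - sq3 Bs / 2 := by
    have := E1 Up hρp.ne' vs Bs
    linarith
  have e1m : dot8 Um (nstar vs Bs) = (dens Um * sq3 (fun k => vel Um k - vs k) / 2 + sq3 (fun k => magB Um k - Bs k) / 2 + intE Um) - sq3 Bs / 2 := by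
    have := E1 Um hρm.ne' vs Bs
    linarith
  have key : σp * (dot8 Up (nstar vs Bs) + sq3 Bs / 2)
        - σm * (dot8 Um (nstar vs Bs) + sq3 Bs / 2)
        - dot8 (dirFlux pfun d2le3 ξ Up) (nstar vs Bs)
        + dot8 (dirFlux pfun d2le3 ξ Um) (nstar vs Bs)
        - dot3 vs Bs * (dirDot d2le3 ξ (magB Um) - dirDot d2le3 ξ (magB Up))
      = (σp - dirDot d2le3 ξ (vel Up)) * (dens Up * sq3 (fun k => vel Up k - vs k) / 2 + sq3 (fun k => magB Up k - Bs k) / 2 + intE Up) + (dirDot d2le3 ξ (vel Um) - σm) * (dens Um * sq3 (fun k => vel Um k - vs k) / 2 + sq3 (fun k => magB Um k - Bs k) / 2 + intE Um)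
      + ((dirDot d2le3 ξ (roeV Up Um) - dirDot d2le3 ξ vs) * (dot3 (fun k => magB Up k - magB Um k) (fun k => magB Up k - Bs k) + dot3 (fun k => magB Up k - magB Um k) (fun k => magB Um k - Bs k)) / 2 + (dirDot d2le3 ξ (vel Up) - dirDot d2le3 ξ (vel Um)) * (Real.sqrt (dens Um) * sq3 (fun k => magB Up k - Bs k) + Real.sqrt (dens Up) * sq3 (fun k => magB Um k - Bs k)) / (2 * (Real.sqrt (dens Up) + Real.sqrt (dens Um)))) + (dirDot d2le3 ξ (magB Up) * dot3 (fun k => vel Up k - vs k) (fun k => magB Up k - Bs k) - dirDot d2le3 ξ (fun k => vel Up k - vs k) * dot3 (magB Up) (fun k => magB Up k - Bs k) - pres pfun Up * dirDot d2le3 ξ (fun k => vel Up k - vs k)) - (dirDot d2le3 ξ (magB Um) * dot3 (fun k => vel Um k - vs k) (fun k => magB Um k - Bs k) - dirDot d2le3 ξ (fun k => vel Um k - vs k) * dot3 (magB Um) (fun k => magB Um k - Bs k) - pres pfun Um * dirDot d2le3 ξ (fun k => vel Um k - vs k)) := by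
    rw [E2 ξ Up hρp.ne' vs Bs, E2 ξ Um hρm.ne' vs Bs, e1p, e1m]
    have hv : ∀ V : MHDState, dens V ≠ 0 → ∀ k, dens V * vel V k = mom V k := by
      intro V hV k
      rw [vel]
      field_simp
    simp only [roeV, dirDot_expand, dot3_expand, sq3_expand, vel]
    field_simp
    ring
  linarith [key, hcore]
end Interface
section Assembly
set_option maxHeartbeats 3200000
variable {pfun : ℝ → ℝ → ℝ}

lemma dot8_smul (c : ℝ) (U V : MHDState) : dot8 (c • U) V = c * dot8 U V := by
  unfold dot8
  rw [Finset.mul_sum]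
  exact Finset.sum_congr rfl fun i _ => by simp [mul_assoc]

lemma dot8_add (U W V : MHDState) : dot8 (U + W) V = dot8 U V + dot8 W V := by
  unfold dot8
  rw [← Finset.sum_add_distrib]
  exact Finset.sum_congr rfl fun i _ => by simp [add_mul]

lemma dot8_sub (U W V : MHDState) : dot8 (U - W) V = dot8 U V - dot8 W V := by
  unfold dot8
  rw [← Finset.sum_sub_distrib]
  exact Finset.sum_congr rfl fun i _ => by simp [sub_mul]

lemma roe_comm {U V : MHDState} (hU : 0 < dens U) (hV : 0 < dens V) (ξ : Fin 2 → ℝ) :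
    dirDot d2le3 ξ (roeV U V) = dirDot d2le3 ξ (roeV V U) := by
  have h1 : (0:ℝ) < Real.sqrt (dens U) := Real.sqrt_pos.2 hU
  have h2 : (0:ℝ) < Real.sqrt (dens V) := Real.sqrt_pos.2 hV
  have h3 : Real.sqrt (dens U) + Real.sqrt (dens V) ≠ 0 := by positivity
  have h4 : Real.sqrt (dens V) + Real.sqrt (dens U) ≠ 0 := by positivity
  simp only [roeV, dirDot_expand]
  field_simp
  ring

lemma norm3_sub_comm (a b : Fin 3 → ℝ) : norm3 (a - b) = norm3 (b - a) := by
  unfold norm3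
  congr 1
  simp only [sq3_expand, Pi.sub_apply]
  ring

lemma E1self (U : MHDState) (hρ : dens U ≠ 0) :
    dot8 U (nstar (vel U) (magB U)) + sq3 (magB U) / 2 = intE U := by
  have h := E1 U hρ (vel U) (magB U)
  have h0 : sq3 (fun k => vel U k - vel U k) = 0 := by
    simp [sq3_expand]
  have h1 : sq3 (fun k => magB U k - magB U k) = 0 := by
    simp [sq3_expand]
  rw [h, h0, h1]
  ring

end Assembly
section Assembly2
set_option maxHeartbeats 6400000
variable {pfun : ℝ → ℝ → ℝ}

lemma dot8_sum {α : Type*} (s : Finset α) (f : α → MHDState) (V : MHDState) :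
    dot8 (∑ j ∈ s, f j) V = ∑ j ∈ s, dot8 (f j) V := by
  unfold dot8
  calc ∑ i, (∑ j ∈ s, f j) i * V i = ∑ i, ∑ j ∈ s, f j i * V i := by
        refine Finset.sum_congr rfl fun i _ => ?_
        rw [Finset.sum_apply, Finset.sum_mul]
    _ = ∑ j ∈ s, ∑ i, f j i * V i := Finset.sum_comm

end Assembly2
/-- Corollary 4.2: positivity preservation of the first-order conservative
2D scheme under the discrete divergence-free condition (one cell, one step). -/
theorem twoD_first_order_conservative_PP (pfun : ℝ → ℝ → ℝ) (hEOS : IsEOS pfun)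
    {N : ℕ} (hN : 1 ≤ N)
    (areaK : ℝ) (hK : 0 < areaK)
    (len : Fin N → ℝ) (hlen : ∀ j, 0 < len j)
    (ξ : Fin N → Fin 2 → ℝ) (hξ : ∀ j, unitVec (ξ j))
    (hGreen : (∑ j, len j • ξ j) = 0)
    (UK : MHDState) (hUK : UK ∈ Gset)
    (Un : Fin N → MHDState) (hUn : ∀ j, Un j ∈ Gset)
    (σr σl : Fin N → ℝ)
    (hr : ∀ j, alphaR pfun d2le3 (ξ j) (Un j) UK ≤ σr j)
    (hl : ∀ j, σl j ≤ alphaL pfun d2le3 (ξ j) UK (Un j))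
    (Δt : ℝ) (hΔt : 0 < Δt)
    (hDDF : areaK⁻¹ *
      (∑ j, len j * dirDot d2le3 (ξ j)
        (fun k => (max (σr j) 0 * magB UK k - min (σl j) 0 * magB (Un j) k)
          / (max (σr j) 0 - min (σl j) 0))) = 0)
    (hCFL : Δt / areaK * (∑ j, len j * (-min (σl j) 0)) < 1) :
    UK - (Δt / areaK) •
      (∑ j, len j • hllFlux pfun d2le3 (ξ j) UK (Un j) (min (σl j) 0) (max (σr j) 0))
      ∈ Gset := by
  have hρK : 0 < dens UK := hUK.1
  have hEK : 0 < intE UK := hUK.2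
  have hcpos : 0 < Δt / areaK := div_pos hΔt hK
  -- wave-speed gap
  have hgap : ∀ j, 0 < (max (σr j) 0 - min (σl j) 0) := by
    intro j
    have hrl : σl j < σr j := by
      have h1 := hr j
      have h2 := hl j
      have hCp := waveC_pos hEOS (hUn j) (ξ j)
      have hCm := waveC_pos hEOS hUK (ξ j)
      have hroe := roe_comm (hUn j).1 hUK.1 (ξ j)
      have hD0 : 0 ≤ norm3 (magB (Un j) - magB UK)
          / (Real.sqrt (dens (Un j)) + Real.sqrt (dens UK)) := by
        apply div_nonneg (norm3_nonneg _)
        have := Real.sqrt_pos.2 (hUn j).1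
        have := Real.sqrt_pos.2 hUK.1
        linarith
      have hmax : dirDot d2le3 (ξ j) (roeV (Un j) UK)
          ≤ max (dirDot d2le3 (ξ j) (vel (Un j))) (dirDot d2le3 (ξ j) (roeV (Un j) UK)) :=
        le_max_right _ _
      have hmin : min (dirDot d2le3 (ξ j) (vel UK)) (dirDot d2le3 (ξ j) (roeV UK (Un j)))
          ≤ dirDot d2le3 (ξ j) (roeV UK (Un j)) := min_le_right _ _
      have hDD : norm3 (magB UK - magB (Un j))
            / (Real.sqrt (dens UK) + Real.sqrt (dens (Un j)))
          = norm3 (magB (Un j) - magB UK)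
            / (Real.sqrt (dens (Un j)) + Real.sqrt (dens UK)) := by
        rw [norm3_sub_comm, add_comm]
      unfold alphaR at h1
      unfold alphaL at h2
      rw [hDD] at h2
      linarith
    rcases le_or_gt (σr j) 0 with h | h
    · have h1 : min (σl j) 0 = σl j := min_eq_left (by linarith)
      have h2 : (0:ℝ) ≤ max (σr j) 0 := le_max_right _ _
      linarith
    · have h1 : max (σr j) 0 = σr j := max_eq_left h.le
      have h2 : min (σl j) 0 ≤ 0 := min_le_right _ _
      linarith
  have hσm0 : ∀ j, min (σl j) 0 ≤ (0:ℝ) := fun j => min_le_right _ _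
  have hσp0 : ∀ j, (0:ℝ) ≤ max (σr j) 0 := fun j => le_max_right _ _
  have hαp : ∀ j, alphaR pfun d2le3 (ξ j) (Un j) UK ≤ max (σr j) 0 :=
    fun j => (hr j).trans (le_max_left _ _)
  have hαm : ∀ j, min (σl j) 0 ≤ alphaL pfun d2le3 (ξ j) UK (Un j) :=
    fun j => (min_le_left _ _).trans (hl j)
  have hlam0 : ∀ j, 0 ≤ (Δt / areaK * (len j * (-(min (σl j) 0)))) := by
    intro j
    have h1 := hσm0 j
    exact mul_nonneg hcpos.le (mul_nonneg (hlen j).le (by linarith))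
  -- flux identity (function level)
  have hfluxfn : ∀ j, hllFlux pfun d2le3 (ξ j) UK (Un j) (min (σl j) 0) (max (σr j) 0)
      = dirFlux pfun d2le3 (ξ j) UK + (min (σl j) 0) • (hllMid pfun d2le3 (ξ j) UK (Un j) (min (σl j) 0) (max (σr j) 0) - UK) := by
    intro j
    funext i
    have hg := (hgap j).ne'
    simp only [hllFlux, hllMid, Pi.smul_apply, Pi.add_apply, Pi.sub_apply, smul_eq_mul]
    field_simp
    ring
  -- Green
  have hgreen' : ∀ l : Fin 2, ∑ j, len j * ξ j l = 0 := by
    intro l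
    have h := congrFun hGreen l
    simpa [Finset.sum_apply, Pi.smul_apply, smul_eq_mul] using h
  have hGreenFlux : (∑ j, len j • dirFlux pfun d2le3 (ξ j) UK) = (0 : MHDState) := by
    funext i
    rw [Finset.sum_apply]
    have hterm : ∀ j, (len j • dirFlux pfun d2le3 (ξ j) UK) i
        = len j * ξ j 0 * flux pfun 0 UK i + len j * ξ j 1 * flux pfun 1 UK i := by
      intro j
      simp only [Pi.smul_apply, smul_eq_mul, dirFlux_apply]
      ring
    rw [Finset.sum_congr rfl fun j _ => hterm j, Finset.sum_add_distrib,
      ← Finset.sum_mul, ← Finset.sum_mul, hgreen' 0, hgreen' 1]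
    simp
  -- decomposition
  have hU'eq : UK - (Δt / areaK) • (∑ j, len j • hllFlux pfun d2le3 (ξ j) UK (Un j) (min (σl j) 0) (max (σr j) 0))
      = UK - (Δt / areaK) • ∑ j, (len j * (min (σl j) 0)) • (hllMid pfun d2le3 (ξ j) UK (Un j) (min (σl j) 0) (max (σr j) 0) - UK) := by
    congr 1
    congr 1
    rw [Finset.sum_congr rfl fun j _ => by
      rw [hfluxfn j, smul_add, smul_smul]]
    rw [Finset.sum_add_distrib, hGreenFlux, zero_add]
  rw [hU'eq]
  set U' : MHDState := UK - (Δt / areaK) • ∑ j, (len j * (min (σl j) 0)) • (hllMid pfun d2le3 (ξ j) UK (Un j) (min (σl j) 0) (max (σr j) 0) - UK) with hU'def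
  -- density split
  have hSlam : ∑ j, (Δt / areaK * (len j * (-(min (σl j) 0)))) < 1 := by
    have h : ∑ j, (Δt / areaK * (len j * (-(min (σl j) 0)))) = Δt / areaK * ∑ j, len j * (-(min (σl j) 0)) := by
      rw [Finset.mul_sum]
    rw [h]
    exact hCFL
  have hsplit : ∀ V : MHDState, ∀ q : ℝ,
      (dot8 UK V + q) - (Δt / areaK) * ∑ j, ((len j * (min (σl j) 0)) * (dot8 (hllMid pfun d2le3 (ξ j) UK (Un j) (min (σl j) 0) (max (σr j) 0)) V - dot8 UK V))
      = (dot8 UK V + q) * (1 - ∑ j, (Δt / areaK * (len j * (-(min (σl j) 0))))) + ∑ j, (Δt / areaK * (len j * (-(min (σl j) 0)))) * (dot8 (hllMid pfun d2le3 (ξ j) UK (Un j) (min (σl j) 0) (max (σr j) 0)) V + q) := by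
    intro V q
    have hs1 : ∀ j, (Δt / areaK) * ((len j * (min (σl j) 0)) * (dot8 (hllMid pfun d2le3 (ξ j) UK (Un j) (min (σl j) 0) (max (σr j) 0)) V - dot8 UK V))
        = (Δt / areaK * (len j * (-(min (σl j) 0)))) * (dot8 UK V + q) - (Δt / areaK * (len j * (-(min (σl j) 0)))) * (dot8 (hllMid pfun d2le3 (ξ j) UK (Un j) (min (σl j) 0) (max (σr j) 0)) V + q) := by
      intro j
      ring
    rw [Finset.mul_sum, Finset.sum_congr rfl fun j _ => hs1 j, Finset.sum_sub_distrib,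
      ← Finset.sum_mul]
    ring
  have hdot8U' : ∀ V : MHDState, dot8 U' V
      = dot8 UK V - (Δt / areaK) * ∑ j, ((len j * (min (σl j) 0)) * (dot8 (hllMid pfun d2le3 (ξ j) UK (Un j) (min (σl j) 0) (max (σr j) 0)) V - dot8 UK V)) := by
    intro V
    rw [hU'def, dot8_sub, dot8_smul, dot8_sum,
      Finset.sum_congr rfl fun j _ => by rw [dot8_smul, dot8_sub]]
  -- density
  have hHd : ∀ j, 0 ≤ (hllMid pfun d2le3 (ξ j) UK (Un j) (min (σl j) 0) (max (σr j) 0)) 0 := by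
    intro j
    have hg := hgap j
    have hvp : dirDot d2le3 (ξ j) (vel (Un j)) ≤ max (σr j) 0 := by
      have h1 := hαp j
      have hCp := waveC_pos hEOS (hUn j) (ξ j)
      have hD0 : 0 ≤ norm3 (magB (Un j) - magB UK)
          / (Real.sqrt (dens (Un j)) + Real.sqrt (dens UK)) := by
        apply div_nonneg (norm3_nonneg _)
        have := Real.sqrt_pos.2 (hUn j).1
        have := Real.sqrt_pos.2 hUK.1
        linarith
      have hmax : dirDot d2le3 (ξ j) (vel (Un j))
          ≤ max (dirDot d2le3 (ξ j) (vel (Un j))) (dirDot d2le3 (ξ j) (roeV (Un j) UK)) :=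
        le_max_left _ _
      unfold alphaR at h1
      linarith
    have hvm : min (σl j) 0 ≤ dirDot d2le3 (ξ j) (vel UK) := by
      have h2 := hαm j
      have hCm := waveC_pos hEOS hUK (ξ j)
      have hD0 : 0 ≤ norm3 (magB UK - magB (Un j))
          / (Real.sqrt (dens UK) + Real.sqrt (dens (Un j))) := by
        apply div_nonneg (norm3_nonneg _)
        have := Real.sqrt_pos.2 (hUn j).1
        have := Real.sqrt_pos.2 hUK.1
        linarith
      have hmin : min (dirDot d2le3 (ξ j) (vel UK)) (dirDot d2le3 (ξ j) (roeV UK (Un j)))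
          ≤ dirDot d2le3 (ξ j) (vel UK) := min_le_left _ _
      unfold alphaL at h2
      linarith
    have hcomp : (hllMid pfun d2le3 (ξ j) UK (Un j) (min (σl j) 0) (max (σr j) 0)) 0 = ((max (σr j) 0 - min (σl j) 0))⁻¹
        * ((max (σr j) 0) * dens (Un j) - dens (Un j) * dirDot d2le3 (ξ j) (vel (Un j))
          - (min (σl j) 0) * dens UK + dens UK * dirDot d2le3 (ξ j) (vel UK)) := by
      simp only [hllMid, Pi.smul_apply, Pi.add_apply, Pi.sub_apply, smul_eq_mul]
      rw [show (dirFlux pfun d2le3 (ξ j) (Un j)) 0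
          = dens (Un j) * dirDot d2le3 (ξ j) (vel (Un j)) from dirFlux_dens _ _,
        show (dirFlux pfun d2le3 (ξ j) UK) 0
          = dens UK * dirDot d2le3 (ξ j) (vel UK) from dirFlux_dens _ _]
      rfl
    rw [hcomp]
    have h1 : 0 ≤ dens (Un j) * ((max (σr j) 0) - dirDot d2le3 (ξ j) (vel (Un j))) :=
      mul_nonneg (hUn j).1.le (by linarith)
    have h2 : 0 ≤ dens UK * (dirDot d2le3 (ξ j) (vel UK) - (min (σl j) 0)) :=
      mul_nonneg hUK.1.le (by linarith)
    have h3 : 0 ≤ ((max (σr j) 0 - min (σl j) 0))⁻¹ := inv_nonneg.2 hg.le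
    have h4 : (max (σr j) 0) * dens (Un j) - dens (Un j) * dirDot d2le3 (ξ j) (vel (Un j))
          - (min (σl j) 0) * dens UK + dens UK * dirDot d2le3 (ξ j) (vel UK)
        = dens (Un j) * ((max (σr j) 0) - dirDot d2le3 (ξ j) (vel (Un j)))
          + dens UK * (dirDot d2le3 (ξ j) (vel UK) - (min (σl j) 0)) := by ring
    rw [h4]
    exact mul_nonneg h3 (by linarith)
  have he0 : ∀ V : MHDState, dot8 V (mk 1 (fun _ => 0) (fun _ => 0) 0) = V 0 := by
    intro V
    rw [dot8_expand]
    simp only [mkv0, mkv1, mkv2, mkv3, mkv4, mkv5, mkv6, mkv7]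
    ring
  have hdens : 0 < dens U' := by
    have h1 := hdot8U' (mk 1 (fun _ => 0) (fun _ => 0) 0)
    have h2 := hsplit (mk 1 (fun _ => 0) (fun _ => 0) 0) 0
    have hbase : 0 < dot8 UK (mk 1 (fun _ => 0) (fun _ => 0) 0) + 0 := by
      rw [he0 UK]; simpa [dens] using hρK
    have hsum : 0 ≤ ∑ j, (Δt / areaK * (len j * (-(min (σl j) 0)))) * (dot8 (hllMid pfun d2le3 (ξ j) UK (Un j) (min (σl j) 0) (max (σr j) 0)) (mk 1 (fun _ => 0) (fun _ => 0) 0) + 0) := by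
      apply Finset.sum_nonneg
      intro j _
      apply mul_nonneg (hlam0 j)
      rw [he0]
      have := hHd j
      linarith
    have hmul : 0 < (dot8 UK (mk 1 (fun _ => 0) (fun _ => 0) 0) + 0) * (1 - ∑ j, (Δt / areaK * (len j * (-(min (σl j) 0))))) :=
      mul_pos hbase (by linarith)
    have hfin : 0 < dot8 U' (mk 1 (fun _ => 0) (fun _ => 0) 0) := by
      rw [h1]
      linarith [h2, hmul, hsum]
    rw [he0 U'] at hfin
    exact hfin
  -- internal energy
  set n : MHDState := nstar (vel U') (magB U') with hn
  set q : ℝ := sq3 (magB U') / 2 with hq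
  -- interface inequality per edge
  have hifc : ∀ j, dot3 (vel U') (magB U')
        * (dirDot d2le3 (ξ j) (magB UK) - dirDot d2le3 (ξ j) (magB (Un j)))
      ≤ (max (σr j) 0 - min (σl j) 0) * (dot8 (hllMid pfun d2le3 (ξ j) UK (Un j) (min (σl j) 0) (max (σr j) 0)) n + q) := by
    intro j
    have hid : (max (σr j) 0 - min (σl j) 0) * (dot8 (hllMid pfun d2le3 (ξ j) UK (Un j) (min (σl j) 0) (max (σr j) 0)) n + q)
        = (max (σr j) 0) * (dot8 (Un j) n + q) - (min (σl j) 0) * (dot8 UK n + q)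
          - dot8 (dirFlux pfun d2le3 (ξ j) (Un j)) n + dot8 (dirFlux pfun d2le3 (ξ j) UK) n := by
      have hd8 : dot8 (hllMid pfun d2le3 (ξ j) UK (Un j) (min (σl j) 0) (max (σr j) 0)) n = ((max (σr j) 0 - min (σl j) 0))⁻¹
          * ((max (σr j) 0) * dot8 (Un j) n - dot8 (dirFlux pfun d2le3 (ξ j) (Un j)) n
            - (min (σl j) 0) * dot8 UK n + dot8 (dirFlux pfun d2le3 (ξ j) UK) n) := by
        simp only [hllMid]
        rw [dot8_smul, dot8_add, dot8_sub, dot8_sub, dot8_smul, dot8_smul]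
      rw [hd8, mul_add, ← mul_assoc, mul_inv_cancel₀ (hgap j).ne', one_mul]
      ring
    have hineq := interface hEOS (hξ j) hUK (hUn j) (hσm0 j) (hσp0 j) (hαp j) (hαm j)
      (vel U') (magB U')
    rw [hid, hn, hq]
    exact hineq
  -- DDF consequence
  have hDDF0 : ∑ j, len j * dirDot d2le3 (ξ j)
      (fun k => ((max (σr j) 0) * magB UK k - (min (σl j) 0) * magB (Un j) k) / ((max (σr j) 0 - min (σl j) 0))) = 0 := by
    rcases mul_eq_zero.mp hDDF with h | h
    · exact absurd h (inv_ne_zero hK.ne')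
    · exact h
  have hDDF1 : ∑ j, len j * ((min (σl j) 0)
      * (dirDot d2le3 (ξ j) (magB UK) - dirDot d2le3 (ξ j) (magB (Un j))) / ((max (σr j) 0 - min (σl j) 0))) = 0 := by
    have hterm : ∀ j, len j * dirDot d2le3 (ξ j)
        (fun k => ((max (σr j) 0) * magB UK k - (min (σl j) 0) * magB (Un j) k) / ((max (σr j) 0 - min (σl j) 0)))
        = len j * dirDot d2le3 (ξ j) (magB UK)
          + len j * ((min (σl j) 0)
            * (dirDot d2le3 (ξ j) (magB UK) - dirDot d2le3 (ξ j) (magB (Un j))) / ((max (σr j) 0 - min (σl j) 0))) := by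
      intro j
      have hg := (hgap j).ne'
      rw [dirDot_expand, dirDot_expand, dirDot_expand]
      field_simp
      ring
    have hBK : ∑ j, len j * dirDot d2le3 (ξ j) (magB UK) = 0 := by
      have hterm2 : ∀ j, len j * dirDot d2le3 (ξ j) (magB UK)
          = len j * ξ j 0 * magB UK 0 + len j * ξ j 1 * magB UK 1 := by
        intro j
        rw [dirDot_expand]
        ring
      rw [Finset.sum_congr rfl fun j _ => hterm2 j, Finset.sum_add_distrib,
        ← Finset.sum_mul, ← Finset.sum_mul, hgreen' 0, hgreen' 1]
      simp
    have := hDDF0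
    rw [Finset.sum_congr rfl fun j _ => hterm j, Finset.sum_add_distrib, hBK, zero_add] at this
    exact this
  have hT0 : ∑ j, (Δt / areaK * (len j * (-(min (σl j) 0)))) * (dot3 (vel U') (magB U')
        * (dirDot d2le3 (ξ j) (magB UK) - dirDot d2le3 (ξ j) (magB (Un j))) / ((max (σr j) 0 - min (σl j) 0))) = 0 := by
    have hterm : ∀ j, (Δt / areaK * (len j * (-(min (σl j) 0)))) * (dot3 (vel U') (magB U')
          * (dirDot d2le3 (ξ j) (magB UK) - dirDot d2le3 (ξ j) (magB (Un j))) / ((max (σr j) 0 - min (σl j) 0)))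
        = (-(Δt / areaK) * dot3 (vel U') (magB U')) * (len j * ((min (σl j) 0)
            * (dirDot d2le3 (ξ j) (magB UK) - dirDot d2le3 (ξ j) (magB (Un j))) / ((max (σr j) 0 - min (σl j) 0)))) := by
      intro j
      ring
    rw [Finset.sum_congr rfl fun j _ => hterm j, ← Finset.mul_sum, hDDF1, mul_zero]
  -- per-edge lower bound
  have hedge : ∀ j, (Δt / areaK * (len j * (-(min (σl j) 0)))) * (dot3 (vel U') (magB U')
        * (dirDot d2le3 (ξ j) (magB UK) - dirDot d2le3 (ξ j) (magB (Un j))) / ((max (σr j) 0 - min (σl j) 0)))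
      ≤ (Δt / areaK * (len j * (-(min (σl j) 0)))) * (dot8 (hllMid pfun d2le3 (ξ j) UK (Un j) (min (σl j) 0) (max (σr j) 0)) n + q) := by
    intro j
    apply mul_le_mul_of_nonneg_left _ (hlam0 j)
    rw [div_le_iff₀ (hgap j)]
    have := hifc j
    linarith [hifc j]
  -- base positivity
  have hbase : 0 < dot8 UK n + q := by
    rw [hn, hq]
    have h := E1 UK hρK.ne' (vel U') (magB U')
    have h1 : 0 ≤ dens UK * sq3 (fun k => vel UK k - vel U' k) :=
      mul_nonneg hρK.le (sq3_nonneg _)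
    have h2 : 0 ≤ sq3 (fun k => magB UK k - magB U' k) := sq3_nonneg _
    linarith [h, h1, h2]
  -- final assembly
  have hpos : 0 < dot8 U' n + q := by
    have h1 := hdot8U' n
    have h2 := hsplit n q
    have hge : ∑ j, (Δt / areaK * (len j * (-(min (σl j) 0)))) * (dot8 (hllMid pfun d2le3 (ξ j) UK (Un j) (min (σl j) 0) (max (σr j) 0)) n + q)
        ≥ ∑ j, (Δt / areaK * (len j * (-(min (σl j) 0)))) * (dot3 (vel U') (magB U')
          * (dirDot d2le3 (ξ j) (magB UK) - dirDot d2le3 (ξ j) (magB (Un j))) / ((max (σr j) 0 - min (σl j) 0))) :=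
      Finset.sum_le_sum fun j _ => hedge j
    have hmul : 0 < (dot8 UK n + q) * (1 - ∑ j, (Δt / areaK * (len j * (-(min (σl j) 0))))) :=
      mul_pos hbase (by linarith)
    have : dot8 U' n + q = (dot8 UK n + q) * (1 - ∑ j, (Δt / areaK * (len j * (-(min (σl j) 0)))))
        + ∑ j, (Δt / areaK * (len j * (-(min (σl j) 0)))) * (dot8 (hllMid pfun d2le3 (ξ j) UK (Un j) (min (σl j) 0) (max (σr j) 0)) n + q) := by
      rw [h1]
      linarith [h2]
    rw [this]
    linarith [hT0, hge, hmul]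
  have hint : 0 < intE U' := by
    have h := E1self U' hdens.ne'
    rw [hn, hq] at hpos
    linarith [h, hpos]
  exact ⟨hdens, hint⟩

end MHD
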